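/- arXiv:2310.19017 — 13 statements merged into one kernel-verified Lean document; each statement's English description precedes it below -/
import Mathlib

section
/- Let G be a finite abelian group and S = {s, s'} ⊆ G \ {0} with s ≠ s' a generating set of G (so that the Cayley digraph Cay(G,S) is strongly connected and 2-valent). Then Cay(G,S) admits a perfect code if and only if there exist integers m, l, h with m > 0, l > 0, 0 ≤ h < m, 3 ∣ m, 3 ∣ (l − h), and σ_p(gcd(m,h)) ∈ {σ_p(m), σ_p(m − h)} for every prime p dividing m·l, such that Cay(G,S) is isomorphic (as a digraph) to Γ_{m,l,h}. -/
/-- Arc relation of the Cayley digraph `Cay(G,S)`: `(x,y)` is an arc iff `y - x ∈ S`. -/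
def cayArc {G : Type*} [AddGroup G] (S : Set G) (x y : G) : Prop := y - x ∈ S

/-- `C` is a perfect code of the digraph with arc relation `arc`:
every vertex is dominated by exactly one element of `C`. -/
def IsPerfectCode {V : Type*} (arc : V → V → Prop) (C : Set V) : Prop :=
  ∀ v : V, ∃! u : V, u ∈ C ∧ (u = v ∨ arc u v)

/-- Arc relation of the digraph `Γ_{m,l,h}` on vertex set `ZMod m × Fin l`. -/
def gammaArc (m l h : ℕ) (x y : ZMod m × Fin l) : Prop :=
  (y.1 = x.1 + 1 ∧ y.2 = x.2) ∨
  (y.1 = x.1 ∧ (y.2 : ℕ) = (x.2 : ℕ) + 1) ∨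
  ((x.2 : ℕ) = l - 1 ∧ y.1 = x.1 - (h : ZMod m) ∧ (y.2 : ℕ) = 0)

/-- Two digraphs (given by their arc relations) are isomorphic. -/
def DigraphIso {V W : Type*} (arcV : V → V → Prop) (arcW : W → W → Prop) : Prop :=
  ∃ e : V ≃ W, ∀ x y : V, arcV x y ↔ arcW (e x) (e y)

/-- The set `C_r = {((3r + t + n(l-h)) mod m, t) : n ∈ ℤ, t ∈ [l]}`. -/
def Cr (m l h : ℕ) (r : ℕ) : Set (ZMod m × Fin l) :=
  {x | ∃ (n : ℤ) (t : Fin l),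
    x = (((3 * (r : ℤ) + (t : ℕ) + n * ((l : ℤ) - (h : ℤ))) : ZMod m), t)}


lemma padic_taut (m h : ℕ) (hm : 0 < m) (hhm : h < m) (p : ℕ) (hp : p.Prime) :
    padicValNat p (Nat.gcd m h) = padicValNat p m ∨
      padicValNat p (Nat.gcd m h) = padicValNat p (m - h) := by
  rcases Nat.eq_zero_or_pos h with rfl | hh
  · left; rw [Nat.gcd_zero_right]
  haveI : Fact p.Prime := ⟨hp⟩
  have hm0 : m ≠ 0 := hm.ne'
  have hh0 : h ≠ 0 := hh.ne'
  have hgcd : padicValNat p (Nat.gcd m h) = min (padicValNat p m) (padicValNat p h) := by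
    have := Nat.factorization_gcd hm0 hh0
    have h1 := congrArg (fun f => f p) this
    simp only [Finsupp.inf_apply] at h1
    rw [Nat.factorization_def _ hp, Nat.factorization_def _ hp, Nat.factorization_def _ hp] at h1
    · exact h1
  rcases le_or_gt (padicValNat p m) (padicValNat p h) with hle | hlt
  · left; rw [hgcd, min_eq_left hle]
  · right
    rw [hgcd, min_eq_right hlt.le]
    have hmh0 : m - h ≠ 0 := by omega
    have hpd : p ^ padicValNat p h ∣ m - h := by
      have h1 : p ^ padicValNat p h ∣ m :=
        dvd_trans (pow_dvd_pow p hlt.le) (pow_padicValNat_dvd)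
      exact Nat.dvd_sub h1 pow_padicValNat_dvd
    have hnd : ¬ p ^ (padicValNat p h + 1) ∣ m - h := by
      intro hcon
      have h1 : p ^ (padicValNat p h + 1) ∣ m :=
        dvd_trans (pow_dvd_pow p hlt) (pow_padicValNat_dvd)
      have h2 : p ^ (padicValNat p h + 1) ∣ h := by
        have := Nat.dvd_sub h1 hcon
        rwa [Nat.sub_sub_self hhm.le] at this
      exact pow_succ_padicValNat_not_dvd hh0 h2
    have hle1 : padicValNat p h ≤ padicValNat p (m - h) :=
      (padicValNat_dvd_iff_le hmh0).mp hpd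
    have hle2 : padicValNat p (m - h) < padicValNat p h + 1 := by
      by_contra hcon
      push_neg at hcon
      exact hnd ((padicValNat_dvd_iff_le hmh0).mpr hcon)
    omega

lemma perfectCode_transfer {V W : Type*} {arcV : V → V → Prop} {arcW : W → W → Prop}
    (hiso : DigraphIso arcV arcW) (hW : ∃ C : Set W, IsPerfectCode arcW C) :
    ∃ C : Set V, IsPerfectCode arcV C := by
  obtain ⟨e, he⟩ := hiso
  obtain ⟨C, hC⟩ := hW
  refine ⟨e ⁻¹' C, fun v => ?_⟩
  obtain ⟨u, ⟨huC, hudom⟩, huniq⟩ := hC (e v)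
  refine ⟨e.symm u, ⟨?_, ?_⟩, ?_⟩
  · simp [Set.mem_preimage, huC]
  · rcases hudom with h1 | h2
    · left; rw [h1]; exact e.symm_apply_apply v
    · right
      have := (he (e.symm u) v).mpr
      rw [e.apply_symm_apply] at this
      exact this h2
  · rintro y ⟨hyC, hydom⟩
    have : e y = u := by
      apply huniq
      refine ⟨hyC, ?_⟩
      rcases hydom with rfl | h2
      · left; rfl
      · right; exact (he y v).mp h2
    rw [← this, e.symm_apply_apply]

lemma zmod3_cases (r : ZMod 3) : r = 0 ∨ r = 1 ∨ r = 2 := by revert r; decide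

lemma gamma_code (m l h : ℕ) (hm : 0 < m) (hl : 0 < l) (hhm : h < m)
    (hm3 : 3 ∣ m) (hlh : (3 : ℤ) ∣ ((l : ℤ) - (h : ℤ))) :
    ∃ C : Set (ZMod m × Fin l), IsPerfectCode (gammaArc m l h) C := by
  haveI : NeZero m := ⟨hm.ne'⟩
  -- the coloring
  set f : ZMod m × Fin l → ZMod 3 :=
    fun x => ZMod.castHom hm3 (ZMod 3) x.1 + 2 * ((x.2 : ℕ) : ZMod 3) with hf
  have hlh3 : ((l : ZMod 3)) = ((h : ZMod 3)) := by
    have : ((l : ℤ) : ZMod 3) = ((h : ℤ) : ZMod 3) := by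
      have := (ZMod.intCast_zmod_eq_zero_iff_dvd ((l : ℤ) - (h : ℤ)) 3).mpr hlh
      push_cast at this ⊢
      linear_combination this
    push_cast at this; exact_mod_cast this
  refine ⟨{x | f x = 0}, fun v => ?_⟩
  -- the three candidate dominators
  have hcand : ∀ u : ZMod m × Fin l, (u = v ∨ gammaArc m l h u v) →
      u = v ∨ u = (v.1 - 1, v.2) ∨
      (0 < (v.2 : ℕ) ∧ u = (v.1, ⟨(v.2 : ℕ) - 1, by omega⟩)) ∨
      ((v.2 : ℕ) = 0 ∧ u = (v.1 + (h : ZMod m), ⟨l - 1, by omega⟩)) := by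
    rintro u (rfl | harc)
    · left; rfl
    · rcases harc with ⟨h1, h2⟩ | ⟨h1, h2⟩ | ⟨h1, h2, h3⟩
      · right; left
        have : u.1 = v.1 - 1 := by rw [h1]; ring
        rw [Prod.ext_iff]; exact ⟨this, h2.symm⟩
      · right; right; left
        refine ⟨by omega, ?_⟩
        rw [Prod.ext_iff]
        exact ⟨h1.symm, by apply Fin.ext; simp; omega⟩
      · right; right; right
        refine ⟨h3, ?_⟩
        rw [Prod.ext_iff]
        constructor
        · rw [h2]; ring
        · apply Fin.ext; simp; omega
  -- f-values of candidates
  have hf1 : f (v.1 - 1, v.2) = f v - 1 := by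
    simp only [hf, map_sub, map_one]; ring
  have hf2 : 0 < (v.2 : ℕ) → f (v.1, ⟨(v.2 : ℕ) - 1, by omega⟩) = f v - 2 := by
    intro hpos
    simp only [hf]
    rw [Nat.cast_sub (by omega : 1 ≤ (v.2 : ℕ))]
    push_cast
    ring
  have hf3 : f (v.1 + (h : ZMod m), ⟨l - 1, by omega⟩) = f v + 2 * ((l : ZMod 3)) - 2 + (h : ZMod 3) - 2 * (((v.2 : ℕ)) : ZMod 3) := by
    simp only [hf, map_add]
    have h1 : ((l - 1 : ℕ) : ZMod 3) = (l : ZMod 3) - 1 := by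
      rw [Nat.cast_sub (by omega : 1 ≤ l)]; push_cast; ring
    have h2 : (ZMod.castHom hm3 (ZMod 3)) ((h : ZMod m)) = (h : ZMod 3) := by
      simp [map_natCast]
    rw [h1, h2]; ring
  have hf3' : f (v.1 + (h : ZMod m), ⟨l - 1, by omega⟩) = f v - 2 - 2 * (((v.2 : ℕ)) : ZMod 3) := by
    rw [hf3, hlh3]
    have : (3 : ZMod 3) = 0 := by decide
    linear_combination ((h : ℕ) : ZMod 3) * this
  rcases zmod3_cases (f v) with h0 | h1 | h2
  · refine ⟨v, ⟨h0, Or.inl rfl⟩, ?_⟩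
    rintro y ⟨hyC, hydom⟩
    rcases hcand y hydom with rfl | rfl | ⟨hpos, rfl⟩ | ⟨hz, rfl⟩
    · rfl
    · exfalso; rw [Set.mem_setOf_eq, hf1, h0] at hyC; revert hyC; decide
    · exfalso; rw [Set.mem_setOf_eq, hf2 hpos, h0] at hyC; revert hyC; decide
    · exfalso; rw [Set.mem_setOf_eq, hf3', h0, hz] at hyC; revert hyC
      simp only [Nat.cast_zero]; decide
  · refine ⟨(v.1 - 1, v.2), ⟨by rw [Set.mem_setOf_eq, hf1, h1]; decide, Or.inr ?_⟩, ?_⟩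
    · left; exact ⟨by ring, rfl⟩
    · rintro y ⟨hyC, hydom⟩
      rcases hcand y hydom with rfl | rfl | ⟨hpos, rfl⟩ | ⟨hz, rfl⟩
      · exfalso; rw [Set.mem_setOf_eq, h1] at hyC; revert hyC; decide
      · rfl
      · exfalso; rw [Set.mem_setOf_eq, hf2 hpos, h1] at hyC; revert hyC; decide
      · exfalso; rw [Set.mem_setOf_eq, hf3', h1, hz] at hyC; revert hyC
        simp only [Nat.cast_zero]; decide
  · rcases Nat.eq_zero_or_pos (v.2 : ℕ) with hz0 | hpos0
    · refine ⟨(v.1 + (h : ZMod m), ⟨l - 1, by omega⟩), ⟨?_, Or.inr ?_⟩, ?_⟩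
      · rw [Set.mem_setOf_eq, hf3', h2, hz0]; simp only [Nat.cast_zero]; decide
      · right; right
        refine ⟨rfl, by ring, hz0⟩
      · rintro y ⟨hyC, hydom⟩
        rcases hcand y hydom with rfl | rfl | ⟨hpos, rfl⟩ | ⟨hz, rfl⟩
        · exfalso; rw [Set.mem_setOf_eq, h2] at hyC; revert hyC; decide
        · exfalso; rw [Set.mem_setOf_eq, hf1, h2] at hyC; revert hyC; decide
        · omega
        · rfl
    · refine ⟨(v.1, ⟨(v.2 : ℕ) - 1, by omega⟩), ⟨by rw [Set.mem_setOf_eq, hf2 hpos0, h2]; decide, Or.inr ?_⟩, ?_⟩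
      · right; left
        exact ⟨rfl, by simp; omega⟩
      · rintro y ⟨hyC, hydom⟩
        rcases hcand y hydom with rfl | rfl | ⟨hpos, rfl⟩ | ⟨hz, rfl⟩
        · exfalso; rw [Set.mem_setOf_eq, h2] at hyC; revert hyC; decide
        · exfalso; rw [Set.mem_setOf_eq, hf1, h2] at hyC; revert hyC; decide
        · rfl
        · omega

open Finset in
lemma char_nec {G : Type*} [AddCommGroup G] [Fintype G] (s s' : G)
    (hs : s ≠ 0) (hs' : s' ≠ 0) (hne : s ≠ s')
    (C : Set G) (hC : IsPerfectCode (cayArc {s, s'}) C) :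
    ∃ χ : AddChar G ℂ, 1 + χ s + χ s' = 0 := by
  classical
  set ind : G → ℂ := fun v => if v ∈ C then 1 else 0 with hind
  have hdom_iff : ∀ u v : G, (u = v ∨ cayArc {s, s'} u v) ↔
      (u = v ∨ u = v - s ∨ u = v - s') := by
    intro u v
    unfold cayArc
    simp only [Set.mem_insert_iff, Set.mem_singleton_iff]
    constructor
    · rintro (rfl | h | h)
      · left; rfl
      · right; left; rw [← h, sub_sub_cancel]
      · right; right; rw [← h, sub_sub_cancel]
    · rintro (rfl | rfl | rfl)
      · left; rfl
      · right; left; rw [sub_sub_cancel]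
      · right; right; rw [sub_sub_cancel]
  have key : ∀ v : G, ind v + ind (v - s) + ind (v - s') = 1 := by
    intro v
    obtain ⟨u, ⟨huC, hudom⟩, huniq⟩ := hC v
    have huniq' : ∀ y : G, y ∈ C → (y = v ∨ y = v - s ∨ y = v - s') → y = u := by
      intro y hyC hy
      exact huniq y ⟨hyC, (hdom_iff y v).mpr hy⟩
    have hor : v ∈ C ∨ v - s ∈ C ∨ v - s' ∈ C := by
      rcases (hdom_iff u v).mp hudom with h | h | h
      · left; rw [← h]; exact huC
      · right; left; rw [← h]; exact huC
      · right; right; rw [← h]; exact huC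
    have hAB : ¬ (v ∈ C ∧ v - s ∈ C) := by
      rintro ⟨hA, hB⟩
      have h1 := huniq' v hA (Or.inl rfl)
      have h2 := huniq' (v - s) hB (Or.inr (Or.inl rfl))
      rw [← h1] at h2
      exact hs (sub_eq_self.mp h2)
    have hAD : ¬ (v ∈ C ∧ v - s' ∈ C) := by
      rintro ⟨hA, hD⟩
      have h1 := huniq' v hA (Or.inl rfl)
      have h2 := huniq' (v - s') hD (Or.inr (Or.inr rfl))
      rw [← h1] at h2
      exact hs' (sub_eq_self.mp h2)
    have hBD : ¬ (v - s ∈ C ∧ v - s' ∈ C) := by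
      rintro ⟨hB, hD⟩
      have h1 := huniq' (v - s) hB (Or.inr (Or.inl rfl))
      have h2 := huniq' (v - s') hD (Or.inr (Or.inr rfl))
      rw [← h1] at h2
      exact hne (sub_right_inj.mp h2.symm)
    by_cases hA : v ∈ C <;> by_cases hB : v - s ∈ C <;> by_cases hD : v - s' ∈ C <;>
      simp [hind, hA, hB, hD] at hAB hAD hBD hor ⊢
  by_contra hno
  push_neg at hno
  set T : AddChar G ℂ → ℂ := fun χ => ∑ v : G, ind v * χ v with hT
  have hshift : ∀ (χ : AddChar G ℂ) (a : G), ∑ v : G, ind (v - a) * χ v = χ a * T χ := by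
    intro χ a
    have h1 : ∑ w : G, ind w * χ (w + a) = ∑ v : G, ind (v - a) * χ v :=
      Fintype.sum_equiv (Equiv.addRight a) (fun w => ind w * χ (w + a))
        (fun v => ind (v - a) * χ v)
        (fun w => by simp only [Equiv.coe_addRight, add_sub_cancel_right])
    rw [← h1]
    simp_rw [AddChar.map_add_eq_mul]
    rw [hT, Finset.mul_sum]
    exact Finset.sum_congr rfl (fun w _ => by ring)
  have step1 : ∀ χ : AddChar G ℂ, (1 + χ s + χ s') * T χ = ∑ v : G, χ v := by
    intro χ
    have hrw : ∑ v : G, χ v = ∑ v : G, (ind v + ind (v - s) + ind (v - s')) * χ v := by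
      refine Finset.sum_congr rfl (fun v _ => ?_)
      rw [key v, one_mul]
    rw [hrw]
    simp only [add_mul, Finset.sum_add_distrib]
    rw [hshift χ s, hshift χ s']
    rw [hT]; ring
  have hT0 : ∀ χ : AddChar G ℂ, χ ≠ 0 → T χ = 0 := by
    intro χ hχ
    have h1 := step1 χ
    rw [AddChar.sum_eq_zero_iff_ne_zero.mpr hχ] at h1
    rcases mul_eq_zero.mp h1 with h2 | h2
    · exact absurd h2 (hno χ)
    · exact h2
  have hsum1 : ∑ χ : AddChar G ℂ, T χ = T 0 :=
    Fintype.sum_eq_single 0 hT0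
  have hsum2 : ∑ χ : AddChar G ℂ, T χ = ind 0 * (Fintype.card G : ℂ) := by
    rw [hT, Finset.sum_comm]
    rw [Finset.sum_eq_single 0]
    · simp only [← Finset.mul_sum]
      rw [AddChar.sum_apply_eq_ite 0, if_pos rfl]
    · intro v _ hv
      rw [← Finset.mul_sum, AddChar.sum_apply_eq_ite v, if_neg hv, mul_zero]
    · intro hcon; exact absurd (Finset.mem_univ 0) hcon
  have hTtriv : T 0 = ∑ v : G, ind v := by
    rw [hT]
    exact Finset.sum_congr rfl (fun v _ => by rw [AddChar.zero_apply, mul_one])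
  have h3T : 3 * T 0 = (Fintype.card G : ℂ) := by
    have hbig : ∑ v : G, (ind v + ind (v - s) + ind (v - s')) = (Fintype.card G : ℂ) := by
      rw [Finset.sum_congr rfl (fun v _ => key v)]
      simp [Finset.card_univ]
    rw [Finset.sum_add_distrib, Finset.sum_add_distrib] at hbig
    have e1 : ∑ v : G, ind (v - s) = ∑ v : G, ind v :=
      Fintype.sum_equiv (Equiv.subRight s) (fun v => ind (v - s)) (fun v => ind v)
        (fun w => rfl)
    have e2 : ∑ v : G, ind (v - s') = ∑ v : G, ind v :=
      Fintype.sum_equiv (Equiv.subRight s') (fun v => ind (v - s')) (fun v => ind v)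
        (fun w => rfl)
    rw [e1, e2] at hbig
    rw [hTtriv]
    linear_combination hbig
  have hcard : (Fintype.card G : ℂ) ≠ 0 :=
    Nat.cast_ne_zero.mpr Fintype.card_ne_zero
  have hEq : T 0 = ind 0 * (Fintype.card G : ℂ) := hsum1.symm.trans hsum2
  by_cases h0 : (0 : G) ∈ C
  · have hi : ind 0 = 1 := by simp [hind, h0]
    rw [hi, one_mul] at hEq
    rw [hEq] at h3T
    have h2 : (2 : ℂ) * (Fintype.card G : ℂ) = 0 := by linear_combination h3T
    rcases mul_eq_zero.mp h2 with h | h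
    · norm_num at h
    · exact hcard h
  · have hi : ind 0 = 0 := by simp [hind, h0]
    rw [hi, zero_mul] at hEq
    rw [hEq, mul_zero] at h3T
    exact hcard h3T.symm

lemma div_of_char {G : Type*} [AddCommGroup G] [Fintype G] (s s' : G) (χ : AddChar G ℂ)
    (hχ : 1 + χ s + χ s' = 0) (m l h : ℕ) (hm : 0 < m)
    (hms : m • s = 0) (hrel : h • s + l • s' = 0) :
    3 ∣ m ∧ (3 : ℤ) ∣ ((l : ℤ) - (h : ℤ)) := by
  set x := χ s with hx
  set y := χ s' with hy
  have hxm : x ^ m = 1 := by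
    rw [hx, ← AddChar.map_nsmul_eq_pow, hms, AddChar.map_zero_eq_one]
  have hyn : y ^ addOrderOf s' = 1 := by
    rw [hy, ← AddChar.map_nsmul_eq_pow, addOrderOf_nsmul_eq_zero, AddChar.map_zero_eq_one]
  have hn' : 0 < addOrderOf s' := addOrderOf_pos s'
  -- each has modulus one
  have habs : ∀ (z : ℂ) (n : ℕ), 0 < n → z ^ n = 1 → z * (starRingEnd ℂ) z = 1 := by
    intro z n hn hzn
    have h1 : ‖z‖ ^ n = 1 := by
      rw [← norm_pow, hzn, norm_one]
    have h2 : ‖z‖ = 1 := by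
      rcases (pow_eq_one_iff_cases).mp h1 with h | h | h
      · omega
      · exact h
      · exfalso; nlinarith [norm_nonneg z, h.1]
    rw [Complex.mul_conj]
    norm_cast
    rw [Complex.normSq_eq_norm_sq, h2]; norm_num
  have hxc : x * (starRingEnd ℂ) x = 1 := habs x m hm hxm
  have hyc : y * (starRingEnd ℂ) y = 1 := habs y _ hn' hyn
  have hyx : y = -1 - x := by linear_combination hχ
  have hconjy : (starRingEnd ℂ) y = -1 - (starRingEnd ℂ) x := by
    rw [hyx]; simp
  have h2 : (-1 - x) * (-1 - (starRingEnd ℂ) x) = 1 := by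
    rw [← hyx, ← hconjy]; exact hyc
  have hconj : x + (starRingEnd ℂ) x = -1 := by
    have hexp : 1 + x + (starRingEnd ℂ) x + x * (starRingEnd ℂ) x = 1 := by
      linear_combination h2
    linear_combination hexp - hxc
  have hq : x ^ 2 + x + 1 = 0 := by linear_combination x * hconj - hxc
  have hx3 : x ^ 3 = 1 := by linear_combination (x - 1) * hq
  have hx1 : x ≠ 1 := by
    intro hcon
    rw [hcon] at hq
    norm_num at hq
  haveI : Fact (Nat.Prime 3) := ⟨by norm_num⟩
  have horder : orderOf x = 3 := orderOf_eq_prime hx3 hx1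
  have h3m : 3 ∣ m := horder ▸ orderOf_dvd_of_pow_eq_one hxm
  refine ⟨h3m, ?_⟩
  have hyeq : y = x ^ 2 := by linear_combination hχ - hq
  have hrel2 : x ^ (h + 2 * l) = 1 := by
    have h0 := congrArg χ hrel
    rw [AddChar.map_add_eq_mul, AddChar.map_nsmul_eq_pow, AddChar.map_nsmul_eq_pow,
      AddChar.map_zero_eq_one, ← hx, ← hy, hyeq, ← pow_mul, ← pow_add] at h0
    exact h0
  have h3hl : 3 ∣ (h + 2 * l) := horder ▸ orderOf_dvd_of_pow_eq_one hrel2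
  have : (3 : ℤ) ∣ ((h : ℤ) + 2 * l) := by exact_mod_cast h3hl
  omega

lemma exists_gamma_iso {G : Type*} [AddCommGroup G] [Fintype G] (s s' : G)
    (hgen : AddSubgroup.closure {s, s'} = ⊤) :
    ∃ m l h : ℕ, 0 < m ∧ 0 < l ∧ h < m ∧ m • s = 0 ∧ h • s + l • s' = 0 ∧
      DigraphIso (cayArc {s, s'}) (gammaArc m l h) := by
  classical
  set m := addOrderOf s with hmdef
  have hm : 0 < m := addOrderOf_pos s
  haveI : NeZero m := ⟨hm.ne'⟩
  set H := AddSubgroup.zmultiples s with hH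
  set q : G ⧸ H := QuotientAddGroup.mk s' with hqdef
  set l := addOrderOf q with hldef
  have hl : 0 < l := addOrderOf_pos q
  have hms : m • s = 0 := addOrderOf_nsmul_eq_zero s
  have hmzs : (m : ℤ) • s = 0 := by rw [natCast_zsmul]; exact hms
  have hQtop : ∀ x : G ⧸ H, x ∈ AddSubgroup.zmultiples q := by
    intro x
    obtain ⟨g, rfl⟩ := QuotientAddGroup.mk_surjective x
    have hg : g ∈ AddSubgroup.closure ({s, s'} : Set G) := by rw [hgen]; trivial
    induction hg using AddSubgroup.closure_induction with
    | mem x hx =>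
      rcases hx with rfl | rfl
      · have hx0 : (QuotientAddGroup.mk x : G ⧸ H) = 0 :=
          (QuotientAddGroup.eq_zero_iff x).mpr (AddSubgroup.mem_zmultiples x)
        rw [hx0]; exact zero_mem _
      · exact AddSubgroup.mem_zmultiples q
    | zero => exact zero_mem _
    | add a b ha hb iha ihb =>
      rw [QuotientAddGroup.mk_add]; exact add_mem iha ihb
    | neg a ha iha =>
      rw [QuotientAddGroup.mk_neg]; exact neg_mem iha
  have hcardQ : Nat.card (G ⧸ H) = l := (addOrderOf_eq_card_of_forall_mem_zmultiples hQtop).symm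
  have hcardH : Nat.card H = m := Nat.card_zmultiples s
  have hcardG : Fintype.card G = m * l := by
    have hc := AddSubgroup.card_eq_card_quotient_mul_card_addSubgroup H
    rw [hcardQ, hcardH] at hc
    rw [← Nat.card_eq_fintype_card, hc, mul_comm]
  have hlq : (l • s' : G) ∈ H := by
    have h0 : l • q = 0 := addOrderOf_nsmul_eq_zero q
    rw [hqdef, ← QuotientAddGroup.mk_nsmul, QuotientAddGroup.eq_zero_iff] at h0
    exact h0
  obtain ⟨k, hk⟩ := AddSubgroup.mem_zmultiples_iff.mp hlq
  set h : ℕ := ((-k) % (m : ℤ)).toNat with hhdef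
  have hmz : (0 : ℤ) < (m : ℤ) := by exact_mod_cast hm
  have hmod1 : 0 ≤ (-k) % (m : ℤ) := Int.emod_nonneg _ hmz.ne'
  have hmod2 : (-k) % (m : ℤ) < m := Int.emod_lt_of_pos _ hmz
  have hts : ((h : ℕ) : ℤ) = (-k) % (m : ℤ) := Int.toNat_of_nonneg hmod1
  have hh : h < m := by omega
  have hhs : (h : ℤ) • s = - (k • s) := by
    rw [hts, Int.emod_def, sub_zsmul, mul_comm, mul_zsmul, hmzs, smul_zero, neg_zsmul]
    abel
  have hrel : h • s + l • s' = 0 := by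
    have h1 : h • s = ((h : ℕ) : ℤ) • s := (natCast_zsmul s h).symm
    rw [h1, hhs, hk]
    abel
  -- the map
  set φ : ZMod m →+ G := ZMod.lift m ⟨zmultiplesHom G s, hmzs⟩ with hφdef
  have hφcast : ∀ j : ℤ, φ ((j : ZMod m)) = j • s := fun j => ZMod.lift_coe m _ j
  have hφone : φ 1 = s := by
    have h1 := hφcast 1
    simpa using h1
  have hφnat : ∀ n : ℕ, φ ((n : ZMod m)) = n • s := by
    intro n
    have h1 := hφcast (n : ℤ)
    rw [Int.cast_natCast, natCast_zsmul] at h1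
    exact h1
  set ψ : ZMod m × Fin l → G := fun p => φ p.1 + (p.2 : ℕ) • s' with hψdef
  have hψ1 : ∀ (a : ZMod m) (t : Fin l), ψ (a + 1, t) = ψ (a, t) + s := by
    intro a t
    simp only [hψdef, map_add, hφone]
    abel
  have hψ2 : ∀ (a : ZMod m) (t u : Fin l), (u : ℕ) = (t : ℕ) + 1 →
      ψ (a, u) = ψ (a, t) + s' := by
    intro a t u hu
    simp only [hψdef, hu, succ_nsmul]
    abel
  have hψ3 : ∀ (a : ZMod m) (t u : Fin l), (t : ℕ) = l - 1 → (u : ℕ) = 0 →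
      ψ (a - (h : ZMod m), u) = ψ (a, t) + s' := by
    intro a t u ht hu
    have hls' : l • s' = - (h • s) := by
      have h1 := hrel
      have h2 : l • s' = -(h • s) + (h • s + l • s') := by abel
      rw [h1, add_zero] at h2
      exact h2
    have hsucc : (l - 1) + 1 = l := by omega
    have h2 : ψ (a, t) + s' = φ a + l • s' := by
      simp only [hψdef, ht]
      rw [← hsucc, succ_nsmul]
      rw [Nat.add_sub_cancel, add_assoc]
    rw [h2, hls']
    simp only [hψdef, map_sub, hφnat, hu, zero_nsmul, add_zero]
    abel
  have hsurj : Function.Surjective ψ := by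
    intro g
    obtain ⟨j, hj⟩ := AddSubgroup.mem_zmultiples_iff.mp (hQtop (QuotientAddGroup.mk g))
    have hlz : (0 : ℤ) < (l : ℤ) := by exact_mod_cast hl
    have ht1 : 0 ≤ j % (l : ℤ) := Int.emod_nonneg _ hlz.ne'
    have ht2 : j % (l : ℤ) < l := Int.emod_lt_of_pos _ hlz
    set t : ℕ := (j % (l : ℤ)).toNat with htdef
    have hts' : ((t : ℕ) : ℤ) = j % (l : ℤ) := Int.toNat_of_nonneg ht1
    have htl : t < l := by omega
    have hlzq : (l : ℤ) • q = 0 := by rw [natCast_zsmul]; exact addOrderOf_nsmul_eq_zero q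
    have hmem : g - t • s' ∈ H := by
      rw [← QuotientAddGroup.eq_zero_iff]
      have e1 : (QuotientAddGroup.mk (g - t • s') : G ⧸ H)
          = QuotientAddGroup.mk g - (t : ℤ) • q := by
        rw [QuotientAddGroup.mk_sub, QuotientAddGroup.mk_nsmul, natCast_zsmul, hqdef]
      rw [e1, ← hj, hts', sub_eq_add_neg, ← neg_zsmul, ← add_zsmul]
      have e2 : j + -(j % (l : ℤ)) = (j / (l : ℤ)) * l := by rw [Int.emod_def]; ring
      rw [e2, mul_zsmul, hlzq, smul_zero]
    obtain ⟨i, hi⟩ := AddSubgroup.mem_zmultiples_iff.mp hmem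
    refine ⟨((i : ZMod m), ⟨t, htl⟩), ?_⟩
    simp only [hψdef, hφcast]
    rw [hi]
    abel
  have hcards : Fintype.card (ZMod m × Fin l) = Fintype.card G := by
    rw [Fintype.card_prod, ZMod.card, Fintype.card_fin, hcardG]
  have hbij : Function.Bijective ψ :=
    (Fintype.bijective_iff_surjective_and_card ψ).mpr ⟨hsurj, hcards⟩
  have hinj := hbij.injective
  have main : ∀ u v : ZMod m × Fin l, cayArc {s, s'} (ψ u) (ψ v) ↔ gammaArc m l h u v := by
    intro u v
    constructor
    · intro harc
      simp only [cayArc, Set.mem_insert_iff, Set.mem_singleton_iff] at harc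
      rcases harc with hcs | hcs
      · have he : ψ v = ψ (u.1 + 1, u.2) := by
          rw [hψ1 u.1 u.2, ← hcs]
          abel
        have hv := hinj he
        exact Or.inl (by rw [hv]; exact ⟨rfl, rfl⟩)
      · by_cases hlast : (u.2 : ℕ) = l - 1
        · have he : ψ v = ψ (u.1 - (h : ZMod m), ⟨0, hl⟩) := by
            rw [hψ3 u.1 u.2 ⟨0, hl⟩ hlast rfl, ← hcs]
            abel
          have hv := hinj he
          exact Or.inr (Or.inr (by rw [hv]; exact ⟨hlast, rfl, rfl⟩))
        · have hlt : (u.2 : ℕ) + 1 < l := by have := u.2.isLt; omega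
          have he : ψ v = ψ (u.1, ⟨(u.2 : ℕ) + 1, hlt⟩) := by
            rw [hψ2 u.1 u.2 ⟨(u.2 : ℕ) + 1, hlt⟩ rfl, ← hcs]
            abel
          have hv := hinj he
          exact Or.inr (Or.inl (by rw [hv]; exact ⟨rfl, rfl⟩))
    · rintro (⟨h1, h2⟩ | ⟨h1, h2⟩ | ⟨h1, h2, h3⟩)
      · have hv : v = (u.1 + 1, u.2) := Prod.ext h1 h2
        show ψ v - ψ u ∈ ({s, s'} : Set G)
        rw [hv, hψ1]
        simp
      · have hv : v = (u.1, v.2) := Prod.ext h1 rfl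
        have he : ψ v = ψ u + s' := by
          rw [hv]
          exact hψ2 u.1 u.2 v.2 h2
        show ψ v - ψ u ∈ ({s, s'} : Set G)
        rw [he]
        simp
      · have hv : v = (u.1 - (h : ZMod m), v.2) := Prod.ext h2 rfl
        have he : ψ v = ψ u + s' := by
          rw [hv]
          exact hψ3 u.1 u.2 v.2 h1 h3
        show ψ v - ψ u ∈ ({s, s'} : Set G)
        rw [he]
        simp
  refine ⟨m, l, h, hm, hl, hh, hms, hrel, ?_⟩
  refine ⟨(Equiv.ofBijective ψ hbij).symm, fun x y => ?_⟩
  have hx := Equiv.ofBijective_apply_symm_apply ψ hbij x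
  have hy := Equiv.ofBijective_apply_symm_apply ψ hbij y
  conv_lhs => rw [← hx, ← hy]
  exact main _ _

theorem statement0 {G : Type*} [AddCommGroup G] [Fintype G] (s s' : G)
    (hs : s ≠ 0) (hs' : s' ≠ 0) (hne : s ≠ s')
    (hgen : AddSubgroup.closure {s, s'} = ⊤) :
    (∃ C : Set G, IsPerfectCode (cayArc {s, s'}) C) ↔
      ∃ m l h : ℕ, 0 < m ∧ 0 < l ∧ h < m ∧ 3 ∣ m ∧ (3 : ℤ) ∣ ((l : ℤ) - (h : ℤ)) ∧
        (∀ p : ℕ, p.Prime → p ∣ m * l →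
          padicValNat p (Nat.gcd m h) = padicValNat p m ∨
          padicValNat p (Nat.gcd m h) = padicValNat p (m - h)) ∧
        DigraphIso (cayArc {s, s'}) (gammaArc m l h) := by
  constructor
  · rintro ⟨C, hC⟩
    obtain ⟨m, l, h, hm, hl, hh, hms, hrel, hiso⟩ := exists_gamma_iso s s' hgen
    obtain ⟨χ, hχ⟩ := char_nec s s' hs hs' hne C hC
    obtain ⟨h3m, h3lh⟩ := div_of_char s s' χ hχ m l h hm hms hrel
    exact ⟨m, l, h, hm, hl, hh, h3m, h3lh, fun p hp _ => padic_taut m h hm hh p hp, hiso⟩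
  · rintro ⟨m, l, h, hm, hl, hh, h3m, h3lh, _, hiso⟩
    exact perfectCode_transfer hiso (gamma_code m l h hm hl hh h3m h3lh)
end

section
/- Let G be a finite abelian group generated by S = {s, s'} ⊆ G \ {0} with s ≠ s', let m be the order of s, let l be the minimal positive integer with l·s' ∈ ⟨s⟩, and let h be the unique integer with 0 ≤ h < m and h·s + l·s' = 0. If C is a perfect code of the Cayley digraph Cay(G,S) with 0 ∈ C, then C = ⋃_{i ∈ {0,1,…,gcd(l−h,m)/3 − 1}} D(i), where D(i) = {(3i + r)·s + r·s' : r ∈ ℤ}. -/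
/-- If a subset of a finite abelian group contains `c` and is closed under adding `t`,
then it is closed under adding any integer multiple of `t`. -/
lemma closed_add_zsmul {G : Type*} [AddCommGroup G] [Fintype G] {C : Set G} {t : G}
    (hstep : ∀ c ∈ C, c + t ∈ C) : ∀ c ∈ C, ∀ n : ℤ, c + n • t ∈ C := by
  have hnat : ∀ c ∈ C, ∀ n : ℕ, c + n • t ∈ C := by
    intro c hc n
    induction n with
    | zero => simpa using hc
    | succ k ih =>
      have := hstep _ ih
      rw [succ_nsmul, ← add_assoc]
      exact this
  intro c hc n
  have kpos : 0 < addOrderOf t := addOrderOf_pos t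
  set k := addOrderOf t with hk
  have hkz : ((k : ℤ)) ≠ 0 := by exact_mod_cast kpos.ne'
  have h0 : (k:ℤ) • t = 0 := by rw [natCast_zsmul]; exact addOrderOf_nsmul_eq_zero t
  have h2 : (((n % (k:ℤ)).toNat : ℕ) : ℤ) = n % (k:ℤ) :=
    Int.toNat_of_nonneg (Int.emod_nonneg n hkz)
  have h1 : n • t = ((n % (k:ℤ)).toNat : ℕ) • t := by
    rw [← natCast_zsmul, h2]
    calc n • t = ((k:ℤ) * (n / (k:ℤ)) + n % (k:ℤ)) • t := by rw [Int.mul_ediv_add_emod]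
    _ = (n / (k:ℤ)) • ((k:ℤ) • t) + (n % (k:ℤ)) • t := by
        rw [add_zsmul, mul_comm, mul_zsmul]
    _ = (n % (k:ℤ)) • t := by rw [h0, smul_zero, zero_add]
  rw [h1]
  exact hnat c hc _

theorem statement1 {G : Type*} [AddCommGroup G] [Fintype G] (s s' : G)
    (hs : s ≠ 0) (hs' : s' ≠ 0) (hne : s ≠ s')
    (hgen : AddSubgroup.closure {s, s'} = ⊤)
    (m l h : ℕ) (hm : m = addOrderOf s)
    (hl : IsLeast {n : ℕ | 0 < n ∧ (n : ℤ) • s' ∈ AddSubgroup.zmultiples s} l)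
    (hhm : h < m) (hh : (h : ℤ) • s + (l : ℤ) • s' = 0)
    (C : Set G) (hC : IsPerfectCode (cayArc {s, s'}) C) (h0 : (0 : G) ∈ C) :
    C = ⋃ i ∈ Finset.range (Int.gcd ((l : ℤ) - (h : ℤ)) (m : ℤ) / 3),
          {x : G | ∃ r : ℤ, x = (3 * (i : ℤ) + r) • s + r • s'} := by
  classical
  have hmpos : 0 < m := hm ▸ addOrderOf_pos s
  have hms : ((m:ℤ)) • s = 0 := by rw [hm, natCast_zsmul]; exact addOrderOf_nsmul_eq_zero s
  obtain ⟨⟨hlpos, hlmem⟩, hlmin⟩ := hl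
  have arc1 : ∀ x : G, cayArc {s, s'} x (x + s) := by intro x; simp [cayArc]
  have arc2 : ∀ x : G, cayArc {s, s'} x (x + s') := by intro x; simp [cayArc]
  have uniq : ∀ v u₁ u₂ : G, u₁ ∈ C → u₂ ∈ C →
      (u₁ = v ∨ cayArc {s,s'} u₁ v) → (u₂ = v ∨ cayArc {s,s'} u₂ v) → u₁ = u₂ := by
    intro v u₁ u₂ h1 h2 d1 d2
    obtain ⟨u, _, hu⟩ := hC v
    rw [hu u₁ ⟨h1, d1⟩, hu u₂ ⟨h2, d2⟩]
  have P1 : ∀ c ∈ C, c + s ∉ C := by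
    intro c hc hcs
    have := uniq (c+s) c (c+s) hc hcs (Or.inr (arc1 c)) (Or.inl rfl)
    exact hs (left_eq_add.mp this)
  have P2 : ∀ c ∈ C, c + s' ∉ C := by
    intro c hc hcs
    have := uniq (c+s') c (c+s') hc hcs (Or.inr (arc2 c)) (Or.inl rfl)
    exact hs' (left_eq_add.mp this)
  have P3 : ∀ c ∈ C, c + (s + s') ∈ C := by
    intro c hc
    obtain ⟨u, ⟨huC, hucase⟩, -⟩ := hC (c + s + s')
    rcases hucase with he | harc
    · rw [← add_assoc]; rw [← he]; exact huC
    · simp only [cayArc, Set.mem_insert_iff, Set.mem_singleton_iff] at harc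
      rcases harc with h1 | h1
      · exfalso
        have hu' : u = c + s' := by
          rw [sub_eq_iff_eq_add] at h1
          have h2 : s + u = s + (c + s') := by rw [← h1]; abel
          exact add_left_cancel h2
        exact (P2 c hc) (hu' ▸ huC)
      · exfalso
        have hu' : u = c + s := by
          rw [sub_eq_iff_eq_add] at h1
          have h2 : s' + u = s' + (c + s) := by rw [← h1]; abel
          exact add_left_cancel h2
        exact (P1 c hc) (hu' ▸ huC)
  have P4 : ∀ c ∈ C, ∀ n : ℤ, c + n • (s + s') ∈ C := closed_add_zsmul P3
  have P5 : ∀ c ∈ C, c + s + s ∉ C := by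
    intro c hc hq
    have hu'C : c + (s - s') ∈ C := by
      have := P4 _ hq (-1)
      have he : c + s + s + (-1 : ℤ) • (s + s') = c + (s - s') := by module
      rwa [he] at this
    have harc : cayArc {s,s'} (c + (s - s')) (c + s) := by
      have := arc2 (c + (s - s'))
      have he : c + (s - s') + s' = c + s := by abel
      rwa [he] at this
    have := uniq (c + s) c (c + (s - s')) hc hu'C (Or.inr (arc1 c)) (Or.inr harc)
    exact hne (sub_eq_zero.mp (left_eq_add.mp this))
  have P6 : ∀ c ∈ C, c + (s + s + s) ∈ C := by
    intro c hc
    obtain ⟨u, ⟨huC, hucase⟩, -⟩ := hC (c + s + s)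
    rcases hucase with he | harc
    · exact absurd (he ▸ huC) (P5 c hc)
    · simp only [cayArc, Set.mem_insert_iff, Set.mem_singleton_iff] at harc
      rcases harc with h1 | h1
      · exfalso
        have hu' : u = c + s := by
          rw [sub_eq_iff_eq_add] at h1
          have h2 : s + u = s + (c + s) := by rw [← h1]; abel
          exact add_left_cancel h2
        exact (P1 c hc) (hu' ▸ huC)
      · have hu' : u = c + s + s - s' := by
          rw [sub_eq_iff_eq_add] at h1
          have h2 : s' + u = s' + (c + s + s - s') := by rw [← h1]; abel
          exact add_left_cancel h2
        have := P4 u huC 1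
        rw [hu'] at this
        have he : c + s + s - s' + (1:ℤ) • (s + s') = c + (s + s + s) := by module
        rwa [he] at this
  have P7 : ∀ c ∈ C, ∀ n : ℤ, c + n • (s + s + s) ∈ C := closed_add_zsmul P6
  have memA : ∀ j r : ℤ, (3*j) • s + r • (s + s') ∈ C := by
    intro j r
    have := P4 _ (P7 0 h0 j) r
    have he : (0:G) + j • (s + s + s) + r • (s + s') = (3*j) • s + r • (s + s') := by module
    rwa [he] at this
  have memA' : ∀ j : ℤ, (3*j) • s ∈ C := by
    intro j
    have := memA j 0
    simpa using this
  have hdC : ∀ d : ℤ, d • s ∈ C → (3:ℤ) ∣ d := by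
    intro d hd
    have h03 : d % 3 = 0 ∨ d % 3 = 1 ∨ d % 3 = 2 := by omega
    rcases h03 with h' | h' | h'
    · omega
    · exfalso
      obtain ⟨q, hq⟩ : ∃ q, d = 3*q + 1 := ⟨d/3, by omega⟩
      apply P1 _ (memA' q)
      have he : (3*q) • s + s = d • s := by rw [hq]; module
      rwa [he]
    · exfalso
      obtain ⟨q, hq⟩ : ∃ q, d = 3*q + 2 := ⟨d/3, by omega⟩
      apply P5 _ (memA' q)
      have he : (3*q) • s + s + s = d • s := by rw [hq]; module
      rwa [he]
  have hlz : ((l:ℤ)) ≠ 0 := by exact_mod_cast hlpos.ne'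
  have ldvd : ∀ r : ℤ, r • s' ∈ AddSubgroup.zmultiples s → (l:ℤ) ∣ r := by
    intro r hr
    by_contra hnd
    have hρ : (r % (l:ℤ)) • s' = r • s' - (r/(l:ℤ)) • ((l:ℤ) • s') := by
      have hmd : r % (l:ℤ) = r - r/(l:ℤ)*(l:ℤ) := by rw [Int.emod_def]; ring
      rw [hmd, sub_zsmul, mul_zsmul]; abel
    have hρmem : (r % (l:ℤ)) • s' ∈ AddSubgroup.zmultiples s := by
      rw [hρ]
      exact AddSubgroup.sub_mem _ hr (AddSubgroup.zsmul_mem _ hlmem _)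
    have hρpos : 0 < r % (l:ℤ) := by
      rcases (Int.emod_nonneg r hlz).lt_or_eq with h1 | h1
      · exact h1
      · exact absurd (Int.dvd_of_emod_eq_zero h1.symm) hnd
    have hρlt : r % (l:ℤ) < l := Int.emod_lt_of_pos r (by exact_mod_cast hlpos)
    have hmem2 : (r % (l:ℤ)).toNat ∈ {n : ℕ | 0 < n ∧ (n : ℤ) • s' ∈ AddSubgroup.zmultiples s} := by
      constructor
      · omega
      · rw [Int.toNat_of_nonneg (le_of_lt hρpos)]; exact hρmem
    have := hlmin hmem2
    omega
  have hlh : ((l:ℤ) - (h:ℤ)) • s = (l:ℤ) • (s + s') := by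
    have h2 : (h:ℤ) • s = -((l:ℤ) • s') := eq_neg_of_add_eq_zero_left hh
    rw [sub_zsmul, h2]; module
  have hgH : ∃ w : ℤ, w • (s + s') = ((Int.gcd ((l:ℤ) - (h:ℤ)) (m:ℤ) : ℕ) : ℤ) • s := by
    refine ⟨Int.gcdA ((l:ℤ)-(h:ℤ)) (m:ℤ) * l, ?_⟩
    have hbz : ((Int.gcd ((l:ℤ) - (h:ℤ)) (m:ℤ) : ℕ) : ℤ)
        = ((l:ℤ)-(h:ℤ)) * Int.gcdA ((l:ℤ)-(h:ℤ)) (m:ℤ) + (m:ℤ) * Int.gcdB ((l:ℤ)-(h:ℤ)) (m:ℤ) :=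
      Int.gcd_eq_gcd_ab _ _
    have e1 : ((m:ℤ) * Int.gcdB ((l:ℤ)-(h:ℤ)) (m:ℤ)) • s = 0 := by
      rw [mul_comm, mul_zsmul, hms, smul_zero]
    have e2 : (((l:ℤ)-(h:ℤ)) * Int.gcdA ((l:ℤ)-(h:ℤ)) (m:ℤ)) • s
        = (Int.gcdA ((l:ℤ)-(h:ℤ)) (m:ℤ) * l) • (s+s') := by
      rw [mul_comm, mul_zsmul, hlh, ← mul_zsmul]
    rw [hbz, add_zsmul, e1, add_zero, e2]
  obtain ⟨w, hw⟩ := hgH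
  set g : ℕ := Int.gcd ((l:ℤ) - (h:ℤ)) (m:ℤ) with hgdef
  have h3g : (3:ℤ) ∣ (g:ℤ) := by
    apply hdC
    have := P4 0 h0 w
    rwa [zero_add, hw] at this
  have h3g' : 3 ∣ g := by exact_mod_cast h3g
  have hgpos : 0 < g := by
    have hmz : (m:ℤ) ≠ 0 := by exact_mod_cast hmpos.ne'
    exact Int.gcd_pos_of_ne_zero_right _ hmz
  ext x
  simp only [Set.mem_iUnion, Finset.mem_range, Set.mem_setOf_eq, exists_prop]
  constructor
  · intro hx
    have hxcl : x ∈ AddSubgroup.closure ({s, s'} : Set G) := by rw [hgen]; trivial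
    obtain ⟨a, b, hab⟩ := AddSubgroup.mem_closure_pair.mp hxcl
    have hdmem : (a - b) • s ∈ C := by
      have := P4 x hx (-b)
      have he : x + (-b) • (s + s') = (a - b) • s := by rw [← hab]; module
      rwa [he] at this
    obtain ⟨j, hj⟩ := hdC _ hdmem
    set k : ℕ := g / 3 with hkdef
    have hkpos : 0 < k := by omega
    have hkz : ((k:ℤ)) ≠ 0 := by exact_mod_cast hkpos.ne'
    have hgk : (g:ℤ) = 3 * (k:ℤ) := by
      have : g = 3 * k := by omega
      exact_mod_cast this
    refine ⟨(j % (k:ℤ)).toNat, ?_, b + (j / (k:ℤ)) * w, ?_⟩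
    · have h1 : j % (k:ℤ) < k := Int.emod_lt_of_pos j (by exact_mod_cast hkpos)
      have h2 : 0 ≤ j % (k:ℤ) := Int.emod_nonneg j hkz
      omega
    · have hi : (((j % (k:ℤ)).toNat : ℕ) : ℤ) = j % (k:ℤ) :=
        Int.toNat_of_nonneg (Int.emod_nonneg j hkz)
      rw [← hab, hi]
      have H1 : (k:ℤ) * (j / (k:ℤ)) + j % (k:ℤ) = j := Int.mul_ediv_add_emod j (k:ℤ)
      have ha : a = 3*(j % (k:ℤ)) + (g:ℤ)*(j/(k:ℤ)) + b := by
        linear_combination hj - 3 * H1 - (j / (k:ℤ)) * hgk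
      have e2 : ((g:ℤ)*(j/(k:ℤ))) • s = ((j/(k:ℤ))*w) • (s+s') := by
        rw [mul_comm, mul_zsmul, ← hw, ← mul_zsmul]
      rw [ha, add_zsmul, add_zsmul, e2]
      module
  · rintro ⟨i, hi, r, hxr⟩
    rw [hxr]
    have := memA (i:ℤ) r
    have he : (3*(i:ℤ)) • s + r • (s+s') = (3*(i:ℤ) + r) • s + r • s' := by module
    rwa [he] at this
end

section
/- Let m, l be positive integers and h an integer with 0 ≤ h < m such that 3 ∣ m and 3 ∣ (l − h), and set b = gcd(l − h, m). Then the set C = ⋃_{r ∈ {0,1,…,b/3 − 1}} C_r, where C_r = {((3r + t + n(l − h)) mod m, t) : n ∈ ℤ, t ∈ {0,…,l−1}} ⊆ ℤ_m × {0,…,l−1}, is a perfect code of Γ_{m,l,h}. -/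
/-- The "third" dominator of a vertex `v` (besides `v` and `(v.1 - 1, v.2)`). -/
def predV (m l h : ℕ) (hl : 0 < l) (v : ZMod m × Fin l) : ZMod m × Fin l :=
  if (v.2 : ℕ) = 0 then (v.1 + (h : ZMod m), ⟨l - 1, by omega⟩)
  else (v.1, ⟨(v.2 : ℕ) - 1, by have := v.2.isLt; omega⟩)

lemma dom_iff (m l h : ℕ) (hl : 0 < l) (u v : ZMod m × Fin l) :
    (u = v ∨ gammaArc m l h u v) ↔
      (u = v ∨ u = (v.1 - 1, v.2) ∨ u = predV m l h hl v) := by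
  unfold gammaArc predV
  constructor
  · rintro (rfl | ⟨h1, h2⟩ | ⟨h1, h2⟩ | ⟨h1, h2, h0⟩)
    · exact Or.inl rfl
    · refine Or.inr (Or.inl (Prod.ext_iff.mpr ⟨?_, h2.symm⟩))
      rw [h1]; ring
    · refine Or.inr (Or.inr ?_)
      rw [if_neg (by omega)]
      refine Prod.ext_iff.mpr ⟨h1.symm, Fin.ext ?_⟩
      show (u.2 : ℕ) = (v.2 : ℕ) - 1
      omega
    · refine Or.inr (Or.inr ?_)
      rw [if_pos h0]
      refine Prod.ext_iff.mpr ⟨?_, Fin.ext h1⟩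
      rw [h2]; ring
  · rintro (rfl | rfl | rfl)
    · exact Or.inl rfl
    · refine Or.inr (Or.inl ⟨?_, rfl⟩)
      show v.1 = v.1 - 1 + 1; ring
    · by_cases hv : (v.2 : ℕ) = 0
      · rw [if_pos hv]
        refine Or.inr (Or.inr (Or.inr ⟨rfl, ?_, hv⟩))
        show v.1 = v.1 + (h : ZMod m) - (h : ZMod m); ring
      · rw [if_neg hv]
        refine Or.inr (Or.inr (Or.inl ⟨rfl, ?_⟩))
        show (v.2 : ℕ) = (v.2 : ℕ) - 1 + 1
        omega

lemma mem_code_iff (m l h : ℕ) (hm : 0 < m) (h3m : 3 ∣ m)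
    (h3 : (3 : ℤ) ∣ ((l : ℤ) - (h : ℤ))) (x : ZMod m × Fin l) :
    x ∈ (⋃ r ∈ Finset.range (Int.gcd ((l : ℤ) - (h : ℤ)) (m : ℤ) / 3), Cr m l h r) ↔
      (ZMod.castHom h3m (ZMod 3)) x.1 = (((x.2 : ℕ)) : ZMod 3) := by
  haveI : NeZero m := ⟨hm.ne'⟩
  have hlh : ((h : ℕ) : ZMod 3) = ((l : ℕ) : ZMod 3) := by
    have h1 : (((h : ℤ)) : ZMod 3) = (((l : ℤ)) : ZMod 3) :=
      (ZMod.intCast_eq_intCast_iff _ _ _).mpr (Int.modEq_iff_dvd.mpr h3)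
    exact_mod_cast h1
  have h30 : (3 : ZMod 3) = 0 := by decide
  constructor
  · intro hx
    simp only [Set.mem_iUnion, Cr, Set.mem_setOf_eq] at hx
    obtain ⟨r, -, n, t, rfl⟩ := hx
    simp only [map_add, map_mul, map_sub, map_intCast, map_natCast, map_ofNat]
    push_cast
    rw [h30, hlh]
    ring
  · intro hx
    set a := x.1 with ha
    set t := x.2 with ht
    have hvala : ((a.val : ℕ) : ZMod m) = a := ZMod.natCast_rightInverse a
    have h3s : (3 : ℤ) ∣ ((a.val : ℤ) - ((t : ℕ) : ℤ)) := by
      have h1 : ((a.val : ℤ) : ZMod 3) = (((t : ℕ) : ℤ) : ZMod 3) := by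
        push_cast
        rw [← map_natCast (ZMod.castHom h3m (ZMod 3)) a.val, hvala]
        exact hx
      rw [ZMod.intCast_eq_intCast_iff] at h1
      exact h1.symm.dvd
    set b : ℕ := Int.gcd ((l : ℤ) - (h : ℤ)) (m : ℤ) with hb
    have hb0 : 0 < b := Int.gcd_pos_iff.mpr (Or.inr (by exact_mod_cast hm.ne'))
    have h3b : (3 : ℤ) ∣ (b : ℤ) := Int.dvd_coe_gcd h3 (by exact_mod_cast h3m)
    set s : ℤ := (a.val : ℤ) - ((t : ℕ) : ℤ) with hs
    set q : ℤ := s / (b : ℤ) with hq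
    have hbz : (0 : ℤ) < (b : ℤ) := by exact_mod_cast hb0
    have hrem : s % (b : ℤ) + (b : ℤ) * q = s := Int.emod_add_mul_ediv s (b : ℤ)
    have hrem0 : 0 ≤ s % (b : ℤ) := Int.emod_nonneg s hbz.ne'
    have hremlt : s % (b : ℤ) < (b : ℤ) := Int.emod_lt_of_pos s hbz
    have h3rem : (3 : ℤ) ∣ s % (b : ℤ) := by
      have : s % (b : ℤ) = s - (b : ℤ) * q := by omega
      rw [this]
      exact dvd_sub h3s (h3b.mul_right q)
    set r : ℕ := (s % (b : ℤ)).toNat / 3 with hr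
    have h3r : ((3 * r : ℕ) : ℤ) = s % (b : ℤ) := by
      have h1 : (3 : ℕ) ∣ (s % (b : ℤ)).toNat := by
        have := Int.toNat_of_nonneg hrem0
        omega
      have : 3 * r = (s % (b : ℤ)).toNat := Nat.mul_div_cancel' h1
      rw [this, Int.toNat_of_nonneg hrem0]
    have hrlt : r < b / 3 := by
      have h1 : (s % (b : ℤ)).toNat < b := by omega
      have h2 : (3 : ℕ) ∣ b := by exact_mod_cast h3b
      have h3' : (3 : ℕ) ∣ (s % (b : ℤ)).toNat := by
        have := Int.toNat_of_nonneg hrem0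
        omega
      omega
    have hbez : ((b : ℕ) : ℤ) = ((l : ℤ) - (h : ℤ)) * Int.gcdA ((l : ℤ) - (h : ℤ)) (m : ℤ)
        + (m : ℤ) * Int.gcdB ((l : ℤ) - (h : ℤ)) (m : ℤ) := Int.gcd_eq_gcd_ab _ _
    set A := Int.gcdA ((l : ℤ) - (h : ℤ)) (m : ℤ) with hA
    set B := Int.gcdB ((l : ℤ) - (h : ℤ)) (m : ℤ) with hB
    simp only [Set.mem_iUnion, Cr, Set.mem_setOf_eq]
    refine ⟨r, Finset.mem_range.mpr hrlt, q * A, t, ?_⟩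
    refine Prod.ext_iff.mpr ⟨?_, rfl⟩
    have key : (a.val : ℤ) - (3 * (r : ℤ) + ((t : ℕ) : ℤ) + (q * A) * ((l : ℤ) - (h : ℤ)))
        = (m : ℤ) * (q * B) := by
      have h3r' : (3 : ℤ) * (r : ℤ) = s % (b : ℤ) := by push_cast at h3r; linarith
      have haval : (a.val : ℤ) = s + ((t : ℕ) : ℤ) := by rw [hs]; ring
      rw [haval, ← hrem, h3r']
      linear_combination q * hbez
    have main : (((a.val : ℤ)) : ZMod m) =
        ((3 * (r : ℤ) + ((t : ℕ) : ℤ) + (q * A) * ((l : ℤ) - (h : ℤ)) : ℤ) : ZMod m) := by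
      rw [ZMod.intCast_eq_intCast_iff]
      exact Int.modEq_iff_dvd.mpr ⟨-(q * B), by linarith [key]⟩
    show a = _
    rw [← hvala]
    push_cast at main ⊢
    linear_combination main

theorem statement3 (m l h : ℕ) (hm : 0 < m) (hl : 0 < l) (hhm : h < m)
    (h3m : 3 ∣ m) (h3 : (3 : ℤ) ∣ ((l : ℤ) - (h : ℤ))) :
    IsPerfectCode (gammaArc m l h)
      (⋃ r ∈ Finset.range (Int.gcd ((l : ℤ) - (h : ℤ)) (m : ℤ) / 3), Cr m l h r) := by
  haveI : NeZero m := ⟨hm.ne'⟩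
  set ψ := ZMod.castHom h3m (ZMod 3) with hψ
  set φ : ZMod m × Fin l → ZMod 3 := fun u => ψ u.1 - (((u.2 : ℕ)) : ZMod 3) with hφ
  have hC : ∀ u : ZMod m × Fin l,
      (u ∈ ⋃ r ∈ Finset.range (Int.gcd ((l : ℤ) - (h : ℤ)) (m : ℤ) / 3), Cr m l h r)
        ↔ φ u = 0 := by
    intro u
    rw [mem_code_iff m l h hm h3m h3 u, hφ]
    exact (sub_eq_zero (a := ψ u.1)).symm
  have hlh3 : ((h : ℕ) : ZMod 3) = ((l : ℕ) : ZMod 3) := by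
    have h1 : (((h : ℤ)) : ZMod 3) = (((l : ℤ)) : ZMod 3) :=
      (ZMod.intCast_eq_intCast_iff _ _ _).mpr (Int.modEq_iff_dvd.mpr h3)
    exact_mod_cast h1
  intro v
  set d1 : ZMod m × Fin l := (v.1 - 1, v.2) with hd1
  set d2 : ZMod m × Fin l := predV m l h hl v with hd2
  have hφ1 : φ d1 = φ v - 1 := by
    simp only [hφ, hd1, map_sub, map_one]
    ring
  have hφ2 : φ d2 = φ v + 1 := by
    rw [hd2]
    unfold predV
    by_cases hv : (v.2 : ℕ) = 0
    · rw [if_pos hv]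
      simp only [hφ, map_add, map_natCast, hv, Nat.cast_zero]
      rw [Nat.cast_sub hl, hlh3]
      push_cast
      ring
    · rw [if_neg hv]
      simp only [hφ]
      rw [Nat.cast_sub (by omega : 1 ≤ (v.2 : ℕ))]
      push_cast
      ring
  have key : ∀ u : ZMod m × Fin l,
      ((u ∈ ⋃ r ∈ Finset.range (Int.gcd ((l : ℤ) - (h : ℤ)) (m : ℤ) / 3), Cr m l h r)
        ∧ (u = v ∨ gammaArc m l h u v)) ↔ (φ u = 0 ∧ (u = v ∨ u = d1 ∨ u = d2)) :=
    fun u => and_congr (hC u) (dom_iff m l h hl u v)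
  rw [show (∃! u, (u ∈ ⋃ r ∈ Finset.range (Int.gcd ((l : ℤ) - (h : ℤ)) (m : ℤ) / 3),
      Cr m l h r) ∧ (u = v ∨ gammaArc m l h u v)) ↔ _ from existsUnique_congr key]
  have hcase : φ v = 0 ∨ φ v = 1 ∨ φ v = 2 :=
    (show ∀ x : ZMod 3, x = 0 ∨ x = 1 ∨ x = 2 by decide) (φ v)
  rcases hcase with h0 | h1 | h2
  · refine ⟨v, ⟨h0, Or.inl rfl⟩, ?_⟩
    rintro u ⟨hu0, (rfl | rfl | rfl)⟩
    · rfl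
    · rw [hφ1, h0] at hu0; exact absurd hu0 (by decide)
    · rw [hφ2, h0] at hu0; exact absurd hu0 (by decide)
  · refine ⟨d1, ⟨by rw [hφ1, h1]; decide, Or.inr (Or.inl rfl)⟩, ?_⟩
    rintro u ⟨hu0, (rfl | rfl | rfl)⟩
    · rw [h1] at hu0; exact absurd hu0 (by decide)
    · rfl
    · rw [hφ2, h1] at hu0; exact absurd hu0 (by decide)
  · refine ⟨d2, ⟨by rw [hφ2, h2]; decide, Or.inr (Or.inr rfl)⟩, ?_⟩
    rintro u ⟨hu0, (rfl | rfl | rfl)⟩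
    · rw [h2] at hu0; exact absurd hu0 (by decide)
    · rw [hφ1, h2] at hu0; exact absurd hu0 (by decide)
    · rfl
end

section
/- Let G be a finite abelian group generated by S = {s, s'} ⊆ G \ {0} with s ≠ s'. If the Cayley digraph Cay(G,S) admits a perfect code, then S contains no involution; that is, neither s nor s' has order 2. -/
lemma key_no_involution {G : Type*} [AddCommGroup G] (s s' : G)
    (hs : s ≠ 0) (hs' : s' ≠ 0) (hne : s ≠ s') (hss : s + s = 0)
    (C : Set G) (hC : IsPerfectCode (cayArc {s, s'}) C) : False := by
  have hneg : -s = s := neg_eq_of_add_eq_zero_left hss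
  have huniq : ∀ v a b : G, a ∈ C → b ∈ C →
      (a = v ∨ cayArc {s, s'} a v) → (b = v ∨ cayArc {s, s'} b v) → a = b := by
    intro v a b ha hb hda hdb
    obtain ⟨u, _, hun⟩ := hC v
    rw [hun a ⟨ha, hda⟩, hun b ⟨hb, hdb⟩]
  have domself : ∀ v : G, (v = v ∨ cayArc {s, s'} v v) := fun v => Or.inl rfl
  have domS : ∀ v : G, (v + s = v ∨ cayArc {s, s'} (v + s) v) := by
    intro v; right
    show v - (v + s) ∈ ({s, s'} : Set G)
    have h : v - (v + s) = -s := by abel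
    rw [h, hneg]; exact Set.mem_insert _ _
  have domS' : ∀ v : G, (v - s' = v ∨ cayArc {s, s'} (v - s') v) := by
    intro v; right
    show v - (v - s') ∈ ({s, s'} : Set G)
    rw [sub_sub_cancel]
    exact Set.mem_insert_iff.mpr (Or.inr rfl)
  have hU1 : ∀ v : G, v ∈ C → v + s ∉ C := by
    intro v hv hvs
    have h := huniq v v (v + s) hv hvs (domself v) (domS v)
    exact hs (left_eq_add.mp h)
  have hU2 : ∀ v : G, v ∈ C → v - s' ∉ C := by
    intro v hv hvs
    have h := huniq v v (v - s') hv hvs (domself v) (domS' v)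
    exact hs' (sub_eq_self.mp h.symm)
  have hU3 : ∀ v : G, v + s ∈ C → v - s' ∉ C := by
    intro v hv hvs
    have h := huniq v (v + s) (v - s') hv hvs (domS v) (domS' v)
    have h2 : s = -s' := by
      rw [sub_eq_add_neg] at h
      exact add_left_cancel h
    have h3 : -s = s' := by rw [h2, neg_neg]
    exact hne (hneg.symm.trans h3)
  have hEx : ∀ v : G, v ∈ C ∨ v + s ∈ C ∨ v - s' ∈ C := by
    intro v
    obtain ⟨u, ⟨huC, hdom⟩, -⟩ := hC v
    rcases hdom with h | h
    · left; rwa [h] at huC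
    · rcases Set.mem_insert_iff.mp h with h1 | h1
      · right; left
        have hu : u = v - s := by rw [← h1]; abel
        have he : v - s = v + s := by rw [sub_eq_add_neg, hneg]
        rw [hu, he] at huC; exact huC
      · right; right
        have hu : u = v - s' := by rw [← h1]; abel
        rwa [hu] at huC
  have claim1 : ∀ v : G, v - s' ∈ C ↔ (v ∉ C ∧ v + s ∉ C) := by
    intro v
    constructor
    · intro h
      exact ⟨fun hv => hU2 v hv h, fun hv => hU3 v hv h⟩
    · rintro ⟨h1, h2⟩
      rcases hEx v with h | h | h
      · exact absurd h h1
      · exact absurd h h2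
      · exact h
  have hper : ∀ w : G, w ∈ C ↔ w + s ∈ C := by
    intro w
    have h1 := claim1 (w + s')
    have h2 := claim1 (w + s' + s)
    rw [add_sub_cancel_right] at h1
    have e : w + s' + s - s' = w + s := by abel
    rw [e] at h2
    have e2 : w + s' + s + s = w + s' := by
      rw [add_assoc, hss, add_zero]
    rw [e2] at h2
    rw [h1, h2]
    tauto
  have hnC : ∀ v : G, v ∉ C := fun v hv => hU1 v hv ((hper v).mp hv)
  rcases hEx 0 with h | h | h
  · exact hnC 0 h
  · exact hnC _ h
  · exact hnC _ h

theorem statement4 {G : Type*} [AddCommGroup G] [Fintype G] (s s' : G)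
    (hs : s ≠ 0) (hs' : s' ≠ 0) (hne : s ≠ s')
    (hgen : AddSubgroup.closure {s, s'} = ⊤)
    (C : Set G) (hC : IsPerfectCode (cayArc {s, s'}) C) :
    addOrderOf s ≠ 2 ∧ addOrderOf s' ≠ 2 := by
  constructor
  · intro h2
    have hss : s + s = 0 := by
      have h := addOrderOf_nsmul_eq_zero s
      rwa [h2, two_nsmul] at h
    exact key_no_involution s s' hs hs' hne hss C hC
  · intro h2
    have hss : s' + s' = 0 := by
      have h := addOrderOf_nsmul_eq_zero s'
      rwa [h2, two_nsmul] at h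
    have hC' : IsPerfectCode (cayArc {s', s}) C := by
      rwa [Set.pair_comm]
    exact key_no_involution s' s hs' hs hne.symm hss C hC'
end

section
/- Let G be a finite abelian group generated by S = {s, s'} ⊆ G \ {0} with s ≠ s', and let C be a perfect code of the Cayley digraph Cay(G,S). If x ∈ C, then x + k·(s + s') ∈ C for every integer k. -/
/-- If `x ∈ C` and `a ∈ S` with `a ≠ 0`, then `x + a ∉ C`. -/
lemma notmem_add {G : Type*} [AddCommGroup G] {S : Set G} {C : Set G}
    (hC : IsPerfectCode (cayArc S) C) {x a : G} (hx : x ∈ C) (ha : a ∈ S)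
    (ha0 : a ≠ 0) : x + a ∉ C := by
  intro hxa
  obtain ⟨u, _, huniq⟩ := hC (x + a)
  have h1 : x = u := huniq x ⟨hx, Or.inr (by simp [cayArc, ha])⟩
  have h2 : x + a = u := huniq (x + a) ⟨hxa, Or.inl rfl⟩
  rw [← h1] at h2
  exact ha0 (add_eq_left.mp h2)

theorem statement5 {G : Type*} [AddCommGroup G] [Fintype G] (s s' : G)
    (hs : s ≠ 0) (hs' : s' ≠ 0) (hne : s ≠ s')
    (hgen : AddSubgroup.closure {s, s'} = ⊤)
    (C : Set G) (hC : IsPerfectCode (cayArc {s, s'}) C)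
    (x : G) (hx : x ∈ C) :
    ∀ k : ℤ, x + k • (s + s') ∈ C := by
  -- one step
  have step : ∀ y ∈ C, y + (s + s') ∈ C := by
    intro y hy
    have hys : y + s ∉ C := notmem_add hC hy (by simp) hs
    have hys' : y + s' ∉ C := notmem_add hC hy (by simp) hs'
    obtain ⟨u, ⟨huC, hdom⟩, _⟩ := hC (y + (s + s'))
    rcases hdom with h | h
    · exact h ▸ huC
    · have h' : y + (s + s') - u = s ∨ y + (s + s') - u = s' := h
      rcases h' with h' | h'
      · have hu : u = y + s' := by
          have h2 := sub_eq_iff_eq_add.mp h'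
          apply add_left_cancel (a := s)
          rw [← h2]; abel
        exact absurd (hu ▸ huC) hys'
      · have hu : u = y + s := by
          have h2 := sub_eq_iff_eq_add.mp h'
          apply add_left_cancel (a := s')
          rw [← h2]; abel
        exact absurd (hu ▸ huC) hys
  have natstep : ∀ n : ℕ, x + n • (s + s') ∈ C := by
    intro n
    induction n with
    | zero => simpa using hx
    | succ n ih =>
        have := step _ ih
        rw [succ_nsmul, ← add_assoc]
        exact this
  intro k
  set g := s + s'
  have hd : (0 : ℤ) < (addOrderOf g : ℤ) := by
    exact_mod_cast addOrderOf_pos g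
  have hmod : k • g = (k % (addOrderOf g : ℤ)).toNat • g := by
    rw [← mod_addOrderOf_zsmul g k, ← natCast_zsmul,
      Int.toNat_of_nonneg (Int.emod_nonneg k (by positivity))]
  rw [hmod]
  exact natstep _
end

section
/- Let G be a finite abelian group generated by S = {s, s'} ⊆ G \ {0} with s ≠ s', and let C be a perfect code of the Cayley digraph Cay(G,S). If x ∈ C, then none of x + s, x + 2s, x + s', x + 2s' belongs to C. -/
theorem statement6 {G : Type*} [AddCommGroup G] [Fintype G] (s s' : G)
    (hs : s ≠ 0) (hs' : s' ≠ 0) (hne : s ≠ s')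
    (hgen : AddSubgroup.closure {s, s'} = ⊤)
    (C : Set G) (hC : IsPerfectCode (cayArc {s, s'}) C)
    (x : G) (hx : x ∈ C) :
    x + s ∉ C ∧ x + 2 • s ∉ C ∧ x + s' ∉ C ∧ x + 2 • s' ∉ C := by
  have arcS : ∀ a : G, cayArc {s, s'} a (a + s) := by
    intro a
    simp [cayArc]
  have arcS' : ∀ a : G, cayArc {s, s'} a (a + s') := by
    intro a
    simp [cayArc]
  -- x + s ∉ C and x + s' ∉ C
  have h1 : x + s ∉ C := by
    intro h
    obtain ⟨u, hu, huniq⟩ := hC (x + s)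
    have e1 := huniq x ⟨hx, Or.inr (arcS x)⟩
    have e2 := huniq (x + s) ⟨h, Or.inl rfl⟩
    exact hs (add_eq_left.mp (e2.trans e1.symm))
  have h1' : x + s' ∉ C := by
    intro h
    obtain ⟨u, hu, huniq⟩ := hC (x + s')
    have e1 := huniq x ⟨hx, Or.inr (arcS' x)⟩
    have e2 := huniq (x + s') ⟨h, Or.inl rfl⟩
    exact hs' (add_eq_left.mp (e2.trans e1.symm))
  -- x + s + s' ∈ C
  have hss' : x + s + s' ∈ C := by
    obtain ⟨u, ⟨huC, hdom⟩, _⟩ := hC (x + s + s')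
    rcases hdom with h | h
    · rwa [h] at huC
    · simp only [cayArc, Set.mem_insert_iff, Set.mem_singleton_iff] at h
      rcases h with h | h
      · have heq := sub_eq_iff_eq_add.mp h
        have h3 : s + (x + s') = s + u := by rw [← heq]; abel
        exact absurd ((add_left_cancel h3) ▸ huC) h1'
      · have heq := sub_eq_iff_eq_add.mp h
        have h3 : s' + (x + s) = s' + u := by rw [← heq]; abel
        exact absurd ((add_left_cancel h3) ▸ huC) h1
  have h2 : x + 2 • s ∉ C := by
    intro h
    rw [two_nsmul, ← add_assoc] at h
    obtain ⟨u, hu, huniq⟩ := hC (x + s + s + s')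
    have a1 : cayArc {s, s'} (x + s + s') (x + s + s + s') := by
      simp only [cayArc, Set.mem_insert_iff, Set.mem_singleton_iff]
      left; abel
    have a2 : cayArc {s, s'} (x + s + s) (x + s + s + s') := arcS' _
    have e1 := huniq (x + s + s') ⟨hss', Or.inr a1⟩
    have e2 := huniq (x + s + s) ⟨h, Or.inr a2⟩
    have : x + s + s' = x + s + s := e1.trans e2.symm
    exact hne (by simpa using this.symm)
  have h2' : x + 2 • s' ∉ C := by
    intro h
    rw [two_nsmul, ← add_assoc] at h
    obtain ⟨u, hu, huniq⟩ := hC (x + s' + s' + s)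
    have a1 : cayArc {s, s'} (x + s + s') (x + s' + s' + s) := by
      simp only [cayArc, Set.mem_insert_iff, Set.mem_singleton_iff]
      right; abel
    have a2 : cayArc {s, s'} (x + s' + s') (x + s' + s' + s) := arcS _
    have e1 := huniq (x + s + s') ⟨hss', Or.inr a1⟩
    have e2 := huniq (x + s' + s') ⟨h, Or.inr a2⟩
    have : x + s + s' = x + s' + s' := e1.trans e2.symm
    exact hne (by simpa [add_assoc, add_comm, add_left_comm] using this)
  exact ⟨h1, h2, h1', h2'⟩
end

section
/- Let G be a finite abelian group generated by S = {s, s'} ⊆ G \ {0} with s ≠ s', and let C be a perfect code of the Cayley digraph Cay(G,S). If x ∈ C, then both x + 3s and x + 3s' belong to C. -/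
lemma pkey {G : Type*} [AddCommGroup G] (s s' : G)
    (hs : s ≠ 0) (hs' : s' ≠ 0) (hne : s ≠ s')
    (C : Set G) (hC : IsPerfectCode (cayArc {s, s'}) C) (v : G) :
    (v ∈ C ∨ v - s ∈ C ∨ v - s' ∈ C) ∧
    (v ∈ C → v - s ∉ C) ∧ (v ∈ C → v - s' ∉ C) ∧ (v - s ∈ C → v - s' ∉ C) := by
  obtain ⟨u, ⟨huC, hdom⟩, huniq⟩ := hC v
  have h1 : ∀ w : G, w ∈ C → (w = v ∨ v - w = s ∨ v - w = s') → w = u := by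
    intro w hw hd
    exact huniq w ⟨hw, by simpa [cayArc, Set.mem_insert_iff] using hd⟩
  refine ⟨?_, ?_, ?_, ?_⟩
  · rcases hdom with h | h
    · exact Or.inl (h ▸ huC)
    · simp only [cayArc, Set.mem_insert_iff, Set.mem_singleton_iff] at h
      rcases h with h | h
      · refine Or.inr (Or.inl ?_)
        have hu : u = v - s := by rw [← h]; abel
        rwa [← hu]
      · refine Or.inr (Or.inr ?_)
        have hu : u = v - s' := by rw [← h]; abel
        rwa [← hu]
  · intro hv hvs
    have e1 := h1 v hv (Or.inl rfl)
    have e2 := h1 (v - s) hvs (Or.inr (Or.inl (by abel)))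
    have h0 : v = v - s := e1.trans e2.symm
    exact hs (by rwa [eq_sub_iff_add_eq, add_eq_left] at h0)
  · intro hv hvs
    have e1 := h1 v hv (Or.inl rfl)
    have e2 := h1 (v - s') hvs (Or.inr (Or.inr (by abel)))
    have h0 : v = v - s' := e1.trans e2.symm
    exact hs' (by rwa [eq_sub_iff_add_eq, add_eq_left] at h0)
  · intro hvs hvs'
    have e1 := h1 (v - s) hvs (Or.inr (Or.inl (by abel)))
    have e2 := h1 (v - s') hvs' (Or.inr (Or.inr (by abel)))
    have h0 : v - s = v - s' := e1.trans e2.symm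
    exact hne (sub_right_inj.mp h0)

lemma main3 {G : Type*} [AddCommGroup G] (s s' : G)
    (hs : s ≠ 0) (hs' : s' ≠ 0) (hne : s ≠ s')
    (C : Set G) (hC : IsPerfectCode (cayArc {s, s'}) C)
    (x : G) (hx : x ∈ C) : x + s + s + s ∈ C := by
  have K := pkey s s' hs hs' hne C hC
  have notS : ∀ y ∈ C, y + s ∉ C := by
    intro y hy h
    exact (K (y + s)).2.1 h (by simpa using hy)
  have notS' : ∀ y ∈ C, y + s' ∉ C := by
    intro y hy h
    exact (K (y + s')).2.2.1 h (by simpa using hy)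
  have notSS' : ∀ y ∈ C, y + s - s' ∉ C := by
    intro y hy h
    exact (K (y + s)).2.2.2 (by simpa using hy) (by rwa [show y + s - s' = y + s - s' from rfl])
  have addss' : ∀ y ∈ C, y + s + s' ∈ C := by
    intro y hy
    rcases (K (y + s + s')).1 with h | h | h
    · exact h
    · exact absurd (by rwa [show y + s + s' - s = y + s' by abel] at h) (notS' y hy)
    · exact absurd (by rwa [show y + s + s' - s' = y + s by abel] at h) (notS y hy)
  have hxss' : x + s + s' ∈ C := addss' x hx
  have h2s : x + s + s ∉ C := by
    have := notSS' (x + s + s') hxss'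
    rwa [show x + s + s' + s - s' = x + s + s by abel] at this
  rcases (K (x + s + s)).1 with h | h | h
  · exact absurd h h2s
  · exact absurd (by rwa [show x + s + s - s = x + s by abel] at h) (notS x hx)
  · have hy : x + s + s - s' ∈ C := h
    have := addss' _ hy
    rwa [show x + s + s - s' + s + s' = x + s + s + s by abel] at this

theorem statement7 {G : Type*} [AddCommGroup G] [Fintype G] (s s' : G)
    (hs : s ≠ 0) (hs' : s' ≠ 0) (hne : s ≠ s')
    (hgen : AddSubgroup.closure {s, s'} = ⊤)
    (C : Set G) (hC : IsPerfectCode (cayArc {s, s'}) C)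
    (x : G) (hx : x ∈ C) :
    x + 3 • s ∈ C ∧ x + 3 • s' ∈ C := by
  have h1 : x + s + s + s ∈ C := main3 s s' hs hs' hne C hC x hx
  have hC' : IsPerfectCode (cayArc {s', s}) C := by rwa [Set.pair_comm] at hC
  have h2 : x + s' + s' + s' ∈ C := main3 s' s hs' hs hne.symm C hC' x hx
  constructor
  · rwa [show x + 3 • s = x + s + s + s by abel]
  · rwa [show x + 3 • s' = x + s' + s' + s' by abel]
end

section
/- Let G be a finite abelian group generated by S = {s, s'} ⊆ G \ {0} with s ≠ s', and suppose the Cayley digraph Cay(G,S) admits a perfect code. If h and l are integers with 0 ≤ h ≤ ord(s), 0 ≤ l ≤ ord(s'), and h·s + l·s' = 0, then 3 ∣ (l − h). -/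
/-- From a perfect code one gets a "position function" `f : G → ZMod 3`
which increases by `1` along `s` and decreases by `1` along `s'`. -/
lemma exists_position_fun {G : Type*} [AddCommGroup G] {s s' : G}
    (hs : s ≠ 0) (hs' : s' ≠ 0) (hne : s ≠ s') {C : Set G}
    (hPC : ∀ v : G, ∃! u, u ∈ C ∧ (u = v ∨ v - u = s ∨ v - u = s')) :
    ∃ f : G → ZMod 3, (∀ v, f (v + s) = f v + 1) ∧ (∀ v, f (v + s') = f v - 1) := by
  classical
  have uniq : ∀ v u₁ u₂ : G, u₁ ∈ C → u₂ ∈ C →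
      (u₁ = v ∨ v - u₁ = s ∨ v - u₁ = s') → (u₂ = v ∨ v - u₂ = s ∨ v - u₂ = s') → u₁ = u₂ :=
    fun v u₁ u₂ h1 h2 d1 d2 => (hPC v).unique ⟨h1, d1⟩ ⟨h2, d2⟩
  have cover : ∀ v : G, v ∈ C ∨ v - s ∈ C ∨ v - s' ∈ C := by
    intro v
    obtain ⟨u, ⟨hu, hd⟩, -⟩ := hPC v
    rcases hd with rfl | hd | hd
    · exact Or.inl hu
    · refine Or.inr (Or.inl ?_)
      rwa [show v - s = u by rw [← hd]; abel]
    · refine Or.inr (Or.inr ?_)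
      rwa [show v - s' = u by rw [← hd]; abel]
  have nS : ∀ c ∈ C, c + s ∉ C := by
    intro c hc hcs
    have h1 : c = c + s :=
      uniq (c + s) c (c + s) hc hcs (Or.inr (Or.inl (by abel))) (Or.inl rfl)
    exact hs (by simpa using h1)
  have nS' : ∀ c ∈ C, c + s' ∉ C := by
    intro c hc hcs
    have h1 : c = c + s' :=
      uniq (c + s') c (c + s') hc hcs (Or.inr (Or.inr (by abel))) (Or.inl rfl)
    exact hs' (by simpa using h1)
  have nM : ∀ c ∈ C, c + s' - s ∉ C := by
    intro c hc hd
    have h1 : c = c + s' - s :=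
      uniq (c + s') c (c + s' - s) hc hd (Or.inr (Or.inr (by abel))) (Or.inr (Or.inl (by abel)))
    have h2 : c + s = c + s' := eq_sub_iff_add_eq.mp h1
    exact hne (add_left_cancel h2)
  have A : ∀ c ∈ C, c + s + s' ∈ C := by
    intro c hc
    obtain ⟨u, ⟨hu, hd⟩, -⟩ := hPC (c + s + s')
    rcases hd with rfl | hd | hd
    · exact hu
    · exfalso
      rw [sub_eq_iff_eq_add] at hd
      have hu2 : u = c + s' := by
        apply add_left_cancel (a := s)
        rw [← hd]; abel
      exact nS' c hc (hu2 ▸ hu)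
    · exfalso
      rw [sub_eq_iff_eq_add] at hd
      have hu2 : u = c + s := by
        apply add_left_cancel (a := s')
        rw [← hd]; abel
      exact nS c hc (hu2 ▸ hu)
  have B : ∀ c ∈ C, c + s + s ∉ C := by
    intro c hc hcc
    have h1 : c + s + s = c + s + s' :=
      uniq (c + s + s + s') (c + s + s) (c + s + s') hcc (A c hc)
        (Or.inr (Or.inr (by abel))) (Or.inr (Or.inl (by abel)))
    exact hne (add_left_cancel h1)
  have B' : ∀ c ∈ C, c + s' + s' ∉ C := by
    intro c hc hcc
    have h1 : c + s' + s' = c + s + s' :=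
      uniq (c + s + s' + s') (c + s' + s') (c + s + s') hcc (A c hc)
        (Or.inr (Or.inl (by abel))) (Or.inr (Or.inr (by abel)))
    exact hne (add_left_cancel (add_right_cancel h1)).symm
  refine ⟨fun v => if v ∈ C then 0 else if v - s ∈ C then 1 else 2, ?_, ?_⟩
  · intro v
    show (if v + s ∈ C then (0 : ZMod 3) else if v + s - s ∈ C then 1 else 2)
        = (if v ∈ C then 0 else if v - s ∈ C then 1 else 2) + 1
    by_cases hv : v ∈ C
    · rw [if_pos hv, if_neg (nS v hv), if_pos (by simpa using hv)]
      decide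
    · by_cases hv1 : v - s ∈ C
      · have hnin : v + s ∉ C := by
          have := B (v - s) hv1
          rwa [show v - s + s + s = v + s by abel] at this
        have hnin2 : v + s - s ∉ C := by simpa using hv
        rw [if_neg hv, if_pos hv1, if_neg hnin, if_neg hnin2]
        decide
      · have hv2 : v - s' ∈ C := ((cover v).resolve_left hv).resolve_left hv1
        have hin : v + s ∈ C := by
          have := A (v - s') hv2
          rwa [show v - s' + s + s' = v + s by abel] at this
        rw [if_neg hv, if_neg hv1, if_pos hin]
        decide
  · intro v
    show (if v + s' ∈ C then (0 : ZMod 3) else if v + s' - s ∈ C then 1 else 2)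
        = (if v ∈ C then 0 else if v - s ∈ C then 1 else 2) - 1
    by_cases hv : v ∈ C
    · have h1 : v + s' - s ∉ C := nM v hv
      rw [if_pos hv, if_neg (nS' v hv), if_neg h1]
      decide
    · by_cases hv1 : v - s ∈ C
      · have hin : v + s' ∈ C := by
          have := A (v - s) hv1
          rwa [show v - s + s + s' = v + s' by abel] at this
        rw [if_neg hv, if_pos hv1, if_pos hin]
        decide
      · have hv2 : v - s' ∈ C := ((cover v).resolve_left hv).resolve_left hv1
        have h1 : v + s' ∉ C := by
          have := B' (v - s') hv2
          rwa [show v - s' + s' + s' = v + s' by abel] at this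
        have h2 : v + s' - s ∈ C := by
          rcases cover (v + s') with hx | hx | hx
          · exact absurd hx h1
          · exact hx
          · exfalso
            rw [show v + s' - s' = v by abel] at hx
            exact hv hx
        rw [if_neg hv, if_neg hv1, if_neg h1, if_pos h2]
        decide

theorem statement8 {G : Type*} [AddCommGroup G] [Fintype G] (s s' : G)
    (hs : s ≠ 0) (hs' : s' ≠ 0) (hne : s ≠ s')
    (hgen : AddSubgroup.closure {s, s'} = ⊤)
    (hC : ∃ C : Set G, IsPerfectCode (cayArc {s, s'}) C)
    (h l : ℕ) (hh : h ≤ addOrderOf s) (hl : l ≤ addOrderOf s')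
    (heq : h • s + l • s' = 0) :
    (3 : ℤ) ∣ ((l : ℤ) - (h : ℤ)) := by
  classical
  obtain ⟨C, hPC⟩ := hC
  unfold IsPerfectCode cayArc at hPC
  have hPC' : ∀ v : G, ∃! u, u ∈ C ∧ (u = v ∨ v - u = s ∨ v - u = s') := by
    intro v
    obtain ⟨u, ⟨h1, h2⟩, h3⟩ := hPC v
    refine ⟨u, ⟨h1, by simpa [Set.mem_insert_iff, or_assoc] using h2⟩,
      fun y hy => h3 y ⟨hy.1, by simpa [Set.mem_insert_iff, or_assoc] using hy.2⟩⟩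
  obtain ⟨f, step1, step2⟩ := exists_position_fun hs hs' hne hPC'
  have ha : ∀ (a : ℕ) (v : G), f (v + a • s) = f v + (a : ZMod 3) := by
    intro a
    induction a with
    | zero => intro v; simp
    | succ n ih =>
      intro v
      rw [succ_nsmul, ← add_assoc, step1, ih]
      push_cast
      ring
  have hb : ∀ (b : ℕ) (v : G), f (v + b • s') = f v - (b : ZMod 3) := by
    intro b
    induction b with
    | zero => intro v; simp
    | succ n ih =>
      intro v
      rw [succ_nsmul, ← add_assoc, step2, ih]
      push_cast
      ring
  have final : f ((h • s : G) + l • s') = f 0 + (h : ZMod 3) - (l : ZMod 3) := by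
    rw [show (h • s : G) + l • s' = (0 + h • s) + l • s' by rw [zero_add], hb, ha]
  rw [heq] at final
  have e2 : (h : ZMod 3) = (l : ZMod 3) := by linear_combination -final
  have e3 : (((l : ℤ) - (h : ℤ) : ℤ) : ZMod 3) = 0 := by
    push_cast
    linear_combination -e2
  exact_mod_cast (ZMod.intCast_zmod_eq_zero_iff_dvd _ 3).mp e3
end

section
/- Let m, l be positive integers and h an integer with 0 ≤ h < m such that 3 ∣ m and 3 ∣ (l − h), and set b = gcd(l − h, m). For r ∈ {0,1,…,b/3 − 1} let C_r = {((3r + t + n(l − h)) mod m, t) : n ∈ ℤ, t ∈ {0,…,l−1}} ⊆ ℤ_m × {0,…,l−1}. Then C_r ∩ C_{r'} = ∅ for all distinct r, r' ∈ {0,1,…,b/3 − 1}, and consequently the union C = ⋃_{r ∈ {0,…,b/3 − 1}} C_r has cardinality m·l/3. -/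
lemma bezout_key (m l h : ℕ) (a : ℤ) :
    (∃ n : ℤ, (m : ℤ) ∣ a - n * ((l : ℤ) - (h : ℤ))) ↔
      (Int.gcd ((l : ℤ) - (h : ℤ)) (m : ℤ) : ℤ) ∣ a := by
  constructor
  · rintro ⟨n, k, hk⟩
    have h1 : (Int.gcd ((l : ℤ) - (h : ℤ)) (m : ℤ) : ℤ) ∣ ((l : ℤ) - (h : ℤ)) :=
      Int.gcd_dvd_left _ _
    have h2 : (Int.gcd ((l : ℤ) - (h : ℤ)) (m : ℤ) : ℤ) ∣ (m : ℤ) := Int.gcd_dvd_right _ _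
    have : a = n * ((l : ℤ) - (h : ℤ)) + (m : ℤ) * k := by linarith
    rw [this]
    exact dvd_add (Dvd.dvd.mul_left h1 n) (Dvd.dvd.mul_right h2 k)
  · rintro ⟨c, rfl⟩
    refine ⟨c * Int.gcdA ((l : ℤ) - (h : ℤ)) (m : ℤ),
      c * Int.gcdB ((l : ℤ) - (h : ℤ)) (m : ℤ), ?_⟩
    rw [Int.gcd_eq_gcd_ab ((l : ℤ) - (h : ℤ)) (m : ℤ)]; ring

lemma mem_Cr_iff (m l h : ℕ) (hm : 0 < m) (r : ℕ) (x : ZMod m × Fin l) :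
    x ∈ Cr m l h r ↔
      (Int.gcd ((l : ℤ) - (h : ℤ)) (m : ℤ) : ℤ) ∣
        ((x.1.val : ℤ) - ((x.2 : ℕ) : ℤ) - 3 * r) := by
  haveI : NeZero m := ⟨hm.ne'⟩
  have hx1 : ((x.1.val : ℤ) : ZMod m) = x.1 := by
    push_cast
    simp [ZMod.natCast_val, ZMod.cast_id]
  constructor
  · rintro ⟨n, t, hx⟩
    have h2 : x.2 = t := by rw [hx]
    have ht2 : ((x.2 : ℕ) : ℤ) = ((t : ℕ) : ℤ) := by rw [h2]
    have h1 : ((x.1.val : ℤ) : ZMod m)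
        = ((3 * (r : ℤ) + ((t : ℕ) : ℤ) + n * ((l : ℤ) - (h : ℤ)) : ℤ) : ZMod m) := by
      rw [hx1, hx]; push_cast; ring
    rw [ZMod.intCast_eq_intCast_iff] at h1
    obtain ⟨k, hk⟩ := Int.ModEq.dvd h1
    rw [← bezout_key m l h]
    exact ⟨n, -k, by rw [ht2]; linarith⟩
  · intro hdvd
    rw [← bezout_key m l h] at hdvd
    obtain ⟨n, k, hk⟩ := hdvd
    refine ⟨n, x.2, ?_⟩
    have key : ((x.1.val : ℤ) : ZMod m)
        = ((3 * (r : ℤ) + ((x.2 : ℕ) : ℤ) + n * ((l : ℤ) - (h : ℤ)) : ℤ) : ZMod m) := by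
      rw [ZMod.intCast_eq_intCast_iff]
      exact Int.modEq_iff_dvd.mpr ⟨-k, by linarith⟩
    rw [hx1] at key
    rw [Prod.ext_iff]
    refine ⟨?_, rfl⟩
    rw [key]; push_cast; ring

theorem statement10 (m l h : ℕ) (hm : 0 < m) (hl : 0 < l) (hhm : h < m)
    (h3m : 3 ∣ m) (h3 : (3 : ℤ) ∣ ((l : ℤ) - (h : ℤ))) :
    (∀ r r' : ℕ, r < Int.gcd ((l : ℤ) - (h : ℤ)) (m : ℤ) / 3 →
      r' < Int.gcd ((l : ℤ) - (h : ℤ)) (m : ℤ) / 3 → r ≠ r' →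
      Cr m l h r ∩ Cr m l h r' = ∅) ∧
    (⋃ r ∈ Finset.range (Int.gcd ((l : ℤ) - (h : ℤ)) (m : ℤ) / 3),
      Cr m l h r).ncard = m * l / 3 := by
  haveI : NeZero m := ⟨hm.ne'⟩
  set d : ℕ := Int.gcd ((l : ℤ) - (h : ℤ)) (m : ℤ) with hdef
  have hdm : (d : ℤ) ∣ (m : ℤ) := Int.gcd_dvd_right _ _
  have hdpos : 0 < d := by
    rcases Nat.eq_zero_or_pos d with h0 | h0
    · exfalso
      have := Int.gcd_eq_zero_iff.mp h0
      have : (m : ℤ) = 0 := this.2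
      omega
    · exact h0
  have h3d : 3 ∣ d := by
    have h3z : (3 : ℤ) ∣ (d : ℤ) := Int.dvd_coe_gcd h3 (by exact_mod_cast h3m)
    exact_mod_cast h3z
  constructor
  · -- disjointness
    intro r r' hr hr' hne
    ext x
    simp only [Set.mem_inter_iff, Set.mem_empty_iff_false, iff_false]
    rintro ⟨hxr, hxr'⟩
    rw [mem_Cr_iff m l h hm] at hxr hxr'
    have hdiff : (d : ℤ) ∣ (3 * (r' : ℤ) - 3 * (r : ℤ)) := by
      have heq : (3 * (r' : ℤ) - 3 * (r : ℤ))
          = ((x.1.val : ℤ) - ((x.2 : ℕ) : ℤ) - 3 * r)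
            - ((x.1.val : ℤ) - ((x.2 : ℕ) : ℤ) - 3 * r') := by ring
      rw [heq]
      exact dvd_sub hxr hxr'
    have h0 : (3 * (r' : ℤ) - 3 * (r : ℤ)) = 0 := by
      refine Int.eq_zero_of_abs_lt_dvd hdiff ?_
      rw [abs_lt]
      obtain ⟨e, he⟩ := h3d
      constructor <;> push_cast <;> omega
    have : r = r' := by omega
    exact hne this
  · -- cardinality of the union
    have hU : (⋃ r ∈ Finset.range (d / 3), Cr m l h r)
        = ↑(Finset.univ.filter fun x : ZMod m × Fin l =>
            (3 : ℤ) ∣ ((x.1.val : ℤ) - ((x.2 : ℕ) : ℤ))) := by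
      ext x
      simp only [Set.mem_iUnion, Finset.mem_range, Finset.coe_filter, Set.mem_setOf_eq,
        Finset.mem_univ, true_and]
      constructor
      · rintro ⟨r, hr, hx⟩
        rw [mem_Cr_iff m l h hm] at hx
        have h3z : (3 : ℤ) ∣ (d : ℤ) := by exact_mod_cast h3d
        have := h3z.trans hx
        omega
      · intro hx
        set v : ℤ := (x.1.val : ℤ) - ((x.2 : ℕ) : ℤ) with hv
        have h3z : (3 : ℤ) ∣ (d : ℤ) := by exact_mod_cast h3d
        obtain ⟨e, he⟩ := id h3d
        have hd0 : (d : ℤ) ≠ 0 := by exact_mod_cast hdpos.ne'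
        have hw0 : 0 ≤ v % (d : ℤ) := Int.emod_nonneg v hd0
        have hwlt : v % (d : ℤ) < d := Int.emod_lt_of_pos v (by exact_mod_cast hdpos)
        have hdw : (d : ℤ) ∣ v - v % (d : ℤ) := by
          refine ⟨v / (d : ℤ), ?_⟩
          have := Int.mul_ediv_add_emod v (d : ℤ)
          linarith
        have h3w : (3 : ℤ) ∣ v % (d : ℤ) := by
          have := h3z.trans hdw
          omega
        obtain ⟨s, hs⟩ := h3w
        refine ⟨s.toNat, by omega, ?_⟩
        rw [mem_Cr_iff m l h hm]
        have hst : ((s.toNat : ℕ) : ℤ) = s := Int.toNat_of_nonneg (by omega)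
        have : (x.1.val : ℤ) - ((x.2 : ℕ) : ℤ) - 3 * (s.toNat : ℕ) = v - v % (d : ℤ) := by
          rw [hst]; omega
        rw [this]
        exact hdw
    rw [hU, Set.ncard_coe_finset]
    have hcard : (Finset.univ.filter fun x : ZMod m × Fin l =>
        (3 : ℤ) ∣ ((x.1.val : ℤ) - ((x.2 : ℕ) : ℤ))).card
        = (Finset.range (m / 3) ×ˢ (Finset.univ : Finset (Fin l))).card := by
      refine Finset.card_nbij' (fun x => (x.1.val / 3, x.2))
        (fun p => (((3 * p.1 + (p.2 : ℕ) % 3 : ℕ) : ZMod m), p.2)) ?_ ?_ ?_ ?_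
      · intro x hx
        rw [Finset.mem_coe, Finset.mem_product, Finset.mem_range]
        exact ⟨Nat.div_lt_div_of_lt_of_dvd h3m (ZMod.val_lt x.1), Finset.mem_univ _⟩
      · intro p hp
        rw [Finset.mem_coe, Finset.mem_product, Finset.mem_range] at hp
        rw [Finset.mem_coe, Finset.mem_filter]
        refine ⟨Finset.mem_univ _, ?_⟩
        have hlt : 3 * p.1 + (p.2 : ℕ) % 3 < m := by
          obtain ⟨k, hk⟩ := h3m
          have := hp.1
          omega
        simp only [ZMod.val_cast_of_lt hlt]
        omega
      · intro x hx
        rw [Finset.mem_coe, Finset.mem_filter] at hx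
        have hmod : x.1.val % 3 = (x.2 : ℕ) % 3 := by
          have := hx.2
          omega
        have hval : 3 * (x.1.val / 3) + (x.2 : ℕ) % 3 = x.1.val := by omega
        rw [Prod.ext_iff]
        refine ⟨?_, rfl⟩
        show ((3 * (x.1.val / 3) + (x.2 : ℕ) % 3 : ℕ) : ZMod m) = x.1
        rw [hval]
        simp [ZMod.natCast_val, ZMod.cast_id]
      · intro p hp
        rw [Finset.mem_coe, Finset.mem_product, Finset.mem_range] at hp
        have hlt : 3 * p.1 + (p.2 : ℕ) % 3 < m := by
          obtain ⟨k, hk⟩ := h3m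
          have := hp.1
          omega
        rw [Prod.ext_iff]
        refine ⟨?_, rfl⟩
        show ((((3 * p.1 + (p.2 : ℕ) % 3 : ℕ) : ZMod m)).val) / 3 = p.1
        rw [ZMod.val_cast_of_lt hlt]
        omega
    rw [hcard, Finset.card_product, Finset.card_range, Finset.card_univ, Fintype.card_fin]
    obtain ⟨k, rfl⟩ := h3m
    rw [Nat.mul_div_cancel_left k (by norm_num), mul_assoc,
      Nat.mul_div_cancel_left _ (by norm_num)]
end

section
/- Let m, l be positive integers and h an integer with 0 ≤ h < m such that 3 ∣ m and 3 ∣ (l − h), and set b = gcd(l − h, m). Then the set C = ⋃_{r ∈ {0,…,b/3 − 1}} C_r, where C_r = {((3r + t + n(l − h)) mod m, t) : n ∈ ℤ, t ∈ {0,…,l−1}}, is an independent set of Γ_{m,l,h}; that is, there is no arc of Γ_{m,l,h} between any two elements of C. -/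
theorem statement12 (m l h : ℕ) (hm : 0 < m) (hl : 0 < l) (hhm : h < m)
    (h3m : 3 ∣ m) (h3 : (3 : ℤ) ∣ ((l : ℤ) - (h : ℤ))) :
    ∀ x ∈ (⋃ r ∈ Finset.range (Int.gcd ((l : ℤ) - (h : ℤ)) (m : ℤ) / 3), Cr m l h r),
      ∀ y ∈ (⋃ r ∈ Finset.range (Int.gcd ((l : ℤ) - (h : ℤ)) (m : ℤ) / 3), Cr m l h r),
        ¬ gammaArc m l h x y := by
  have hlh : ((l : ℕ) : ZMod 3) = ((h : ℕ) : ZMod 3) := by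
    have : (((l : ℤ) - (h : ℤ) : ℤ) : ZMod 3) = 0 :=
      (ZMod.intCast_zmod_eq_zero_iff_dvd _ 3).mpr (by exact_mod_cast h3)
    push_cast at this
    linear_combination this
  have h30 : (3 : ZMod 3) = 0 := by decide
  -- key: any element of any `Cr` satisfies `cast x.1 = x.2` in `ZMod 3`
  have key : ∀ (r : ℕ) (x : ZMod m × Fin l), x ∈ Cr m l h r →
      ZMod.castHom h3m (ZMod 3) x.1 = ((x.2 : ℕ) : ZMod 3) := by
    rintro r x ⟨n, t, rfl⟩
    simp only [map_add, map_mul, map_sub, map_ofNat, map_natCast, map_intCast]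
    push_cast
    linear_combination ((r : ℕ) : ZMod 3) * h30 + ((n : ℤ) : ZMod 3) * hlh
  intro x hx y hy harc
  simp only [Set.mem_iUnion] at hx hy
  obtain ⟨rx, -, hx⟩ := hx
  obtain ⟨ry, -, hy⟩ := hy
  have hxc := key rx x hx
  have hyc := key ry y hy
  rcases harc with ⟨h1, h2⟩ | ⟨h1, h2⟩ | ⟨h1, h2, h3'⟩
  · rw [h1, map_add, map_one, hxc, h2] at hyc
    exact one_ne_zero (by linear_combination hyc)
  · rw [h1, hxc, h2] at hyc
    push_cast at hyc
    exact one_ne_zero (by linear_combination -hyc)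
  · rw [h2, map_sub, hxc, h1, h3'] at hyc
    rw [map_natCast] at hyc
    have hl1 : ((l - 1 : ℕ) : ZMod 3) = (l : ZMod 3) - 1 := by
      have h' : (l - 1 : ℕ) + 1 = l := Nat.succ_pred_eq_of_pos hl
      have h'' := congrArg (fun n : ℕ => (n : ZMod 3)) h'
      push_cast at h''
      linear_combination h''
    rw [hl1, hlh] at hyc
    simp only [Nat.cast_zero] at hyc
    exact one_ne_zero (by linear_combination -hyc)
end

section
/- Let G be a finite abelian group generated by {s, s'} with s ≠ s' and s, s' ≠ 0, let m be the order of s, let l be the minimal positive integer with l·s' ∈ ⟨s⟩, and let h be the unique integer with 0 ≤ h < m and h·s + l·s' = 0. Then ⟨s⟩ ∩ ⟨s + s'⟩ = ⟨(l − h)·s⟩. -/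
theorem statement14 {G : Type*} [AddCommGroup G] [Fintype G] (s s' : G)
    (hs : s ≠ 0) (hs' : s' ≠ 0) (hne : s ≠ s')
    (hgen : AddSubgroup.closure {s, s'} = ⊤)
    (m l h : ℕ) (hm : m = addOrderOf s)
    (hl : IsLeast {n : ℕ | 0 < n ∧ (n : ℤ) • s' ∈ AddSubgroup.zmultiples s} l)
    (hhm : h < m) (hh : (h : ℤ) • s + (l : ℤ) • s' = 0) :
    AddSubgroup.zmultiples s ⊓ AddSubgroup.zmultiples (s + s') =
      AddSubgroup.zmultiples ((((l : ℤ) - (h : ℤ))) • s) := by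
  obtain ⟨⟨hlpos, hls'⟩, hlmin⟩ := hl
  have hl0 : (0:ℤ) < (l:ℤ) := by exact_mod_cast hlpos
  -- key identity: (l - h) • s = l • (s + s')
  have hkey : ((l:ℤ) - (h:ℤ)) • s = (l:ℤ) • (s + s') := by
    have : (h:ℤ) • s = -((l:ℤ) • s') := by
      rw [eq_neg_iff_add_eq_zero]; exact hh
    rw [smul_add, sub_smul, this, sub_neg_eq_add]
  -- divisibility from minimality
  have key : ∀ k : ℤ, k • s' ∈ AddSubgroup.zmultiples s → (l:ℤ) ∣ k := by
    intro k hk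
    have hr : (k % l) • s' ∈ AddSubgroup.zmultiples s := by
      have hmod : k % (l:ℤ) = k - (l:ℤ) * (k / l) := Int.emod_def k l
      rw [hmod, sub_smul, mul_comm, mul_smul]
      exact AddSubgroup.sub_mem _ hk (AddSubgroup.zsmul_mem _ hls' _)
    by_contra hnd
    have hrpos : 0 < k % l := lt_of_le_of_ne (Int.emod_nonneg k (ne_of_gt hl0))
      (by intro hcon; exact hnd (Int.dvd_of_emod_eq_zero hcon.symm))
    have hrlt : k % l < l := Int.emod_lt_of_pos k hl0
    set r : ℕ := (k % l).toNat with hrdef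
    have hrcast : (r : ℤ) = k % l := Int.toNat_of_nonneg (le_of_lt hrpos)
    have hmem : r ∈ {n : ℕ | 0 < n ∧ (n : ℤ) • s' ∈ AddSubgroup.zmultiples s} := by
      constructor
      · exact_mod_cast hrcast ▸ hrpos
      · rw [hrcast]; exact hr
    have := hlmin hmem
    have : (l:ℤ) ≤ (r:ℤ) := by exact_mod_cast this
    omega
  apply le_antisymm
  · rintro x ⟨hx1, hx2⟩
    obtain ⟨k, hk⟩ := AddSubgroup.mem_zmultiples_iff.mp hx2
    have hks' : k • s' ∈ AddSubgroup.zmultiples s := by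
      have hxe : k • s' = x - k • s := by
        rw [← hk, smul_add]; abel
      rw [hxe]
      exact AddSubgroup.sub_mem _ hx1 (AddSubgroup.zsmul_mem _ (AddSubgroup.mem_zmultiples s) _)
    obtain ⟨q, rfl⟩ := key k hks'
    refine AddSubgroup.mem_zmultiples_iff.mpr ⟨q, ?_⟩
    rw [hkey, ← hk, mul_comm, mul_smul]
  · rw [AddSubgroup.zmultiples_le]
    exact ⟨AddSubgroup.zsmul_mem _ (AddSubgroup.mem_zmultiples s) _,
      hkey ▸ AddSubgroup.zsmul_mem _ (AddSubgroup.mem_zmultiples (s + s')) _⟩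
end

section
/- Let G be a finite abelian group generated by S = {s, s'} ⊆ G \ {0} with s ≠ s', let m be the order of s, let l be the minimal positive integer with l·s' ∈ ⟨s⟩, and let h be the unique integer with 0 ≤ h < m and h·s + l·s' = 0. Then the Cayley digraph Cay(G,S) is isomorphic (as a digraph) to Γ_{m,l,h}. -/
theorem statement15 {G : Type*} [AddCommGroup G] [Fintype G] (s s' : G)
    (hs : s ≠ 0) (hs' : s' ≠ 0) (hne : s ≠ s')
    (hgen : AddSubgroup.closure {s, s'} = ⊤)
    (m l h : ℕ) (hm : m = addOrderOf s)
    (hl : IsLeast {n : ℕ | 0 < n ∧ (n : ℤ) • s' ∈ AddSubgroup.zmultiples s} l)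
    (hhm : h < m) (hh : (h : ℤ) • s + (l : ℤ) • s' = 0) :
    DigraphIso (cayArc {s, s'}) (gammaArc m l h) := by
  have hm0 : 0 < m := hm ▸ addOrderOf_pos s
  haveI : NeZero m := ⟨hm0.ne'⟩
  have hl0 : 0 < l := hl.1.1
  have hms : ((m : ℤ)) • s = 0 := by
    rw [natCast_zsmul, hm]; exact addOrderOf_nsmul_eq_zero s
  set φ : ZMod m →+ G := ZMod.lift m ⟨zmultiplesHom G s, by simpa using hms⟩ with hφdef
  have hφ : ∀ k : ℤ, φ (k : ZMod m) = k • s := fun k => ZMod.lift_coe m _ k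
  have hφ1 : φ 1 = s := by simpa using hφ 1
  have hφnat : ∀ k : ℕ, φ (k : ZMod m) = (k : ℤ) • s := by
    intro k; have := hφ (k : ℤ); rwa [Int.cast_natCast] at this
  have hφker : ∀ a : ZMod m, φ a = 0 → a = 0 := by
    intro a ha
    have hcast : ((a.val : ℤ) : ZMod m) = a := by
      push_cast; exact (ZMod.natCast_val a).trans (ZMod.cast_id _ _)
    rw [← hcast, hφ] at ha
    have hdvd : addOrderOf s ∣ a.val := by
      rw [natCast_zsmul] at ha
      exact addOrderOf_dvd_of_nsmul_eq_zero ha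
    rw [← hm] at hdvd
    have hv : a.val = 0 := Nat.eq_zero_of_dvd_of_lt hdvd (ZMod.val_lt a)
    rw [← hcast, hv]; simp
  have hφmem : ∀ a : ZMod m, φ a ∈ AddSubgroup.zmultiples s := by
    intro a
    have hcast : ((a.val : ℤ) : ZMod m) = a := by
      push_cast; exact (ZMod.natCast_val a).trans (ZMod.cast_id _ _)
    rw [← hcast, hφ]
    exact AddSubgroup.zsmul_mem _ (AddSubgroup.mem_zmultiples s) _
  -- the map
  set f : ZMod m × Fin l → G := fun x => φ x.1 + (x.2 : ℕ) • s' with hfdef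
  have hf : ∀ (k : ℤ) (t : Fin l), f ((k : ZMod m), t) = k • s + ((t : ℕ) : ℤ) • s' := by
    intro k t; simp only [hfdef, hφ, natCast_zsmul]
  have hls' : (l : ℤ) • s' = -((h : ℤ) • s) := eq_neg_of_add_eq_zero_right hh
  -- no small positive multiple of s' lies in <s>
  have hnotmem : ∀ d : ℤ, 0 < d → d < l → d • s' ∉ AddSubgroup.zmultiples s := by
    intro d hd hdl hmem
    have h1 : ((d.toNat : ℤ)) = d := Int.toNat_of_nonneg hd.le
    have h2 : l ≤ d.toNat := hl.2 ⟨by omega, by rw [h1]; exact hmem⟩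
    omega
  -- injectivity
  have hinj : Function.Injective f := by
    rintro ⟨a, b⟩ ⟨a', b'⟩ hfe
    simp only [hfdef] at hfe
    have key : (((b' : ℕ) : ℤ) - ((b : ℕ) : ℤ)) • s' = φ (a - a') := by
      have hfe' : φ a + ((b : ℕ) : ℤ) • s' = φ a' + ((b' : ℕ) : ℤ) • s' := by
        simpa [natCast_zsmul] using hfe
      rw [map_sub, sub_zsmul, ← sub_eq_add_neg, sub_eq_sub_iff_add_eq_add, add_comm]
      exact hfe'.symm
    have hbb : (b : ℕ) = (b' : ℕ) := by
      by_contra hbb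
      rcases lt_or_gt_of_ne hbb with hlt | hlt
      · exact hnotmem _ (by omega) (by have := b'.isLt; omega)
          (key ▸ hφmem (a - a')) 
      · have : (-((((b' : ℕ) : ℤ)) - ((b : ℕ) : ℤ))) • s' ∈ AddSubgroup.zmultiples s := by
          rw [neg_zsmul, key]
          exact AddSubgroup.neg_mem _ (hφmem _)
        exact hnotmem _ (by omega) (by have := b.isLt; omega) this
    have hba : a = a' := by
      have : φ (a - a') = 0 := by
        rw [← key]; simp [hbb]
      have := hφker _ this
      rwa [sub_eq_zero] at this
    exact Prod.ext hba (Fin.ext hbb)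
  -- surjectivity
  have hsurj : Function.Surjective f := by
    intro g
    have hg : g ∈ AddSubgroup.closure ({s, s'} : Set G) := hgen ▸ AddSubgroup.mem_top g
    obtain ⟨i, j, hij⟩ := AddSubgroup.mem_closure_pair.1 hg
    have hlz : (0 : ℤ) < l := by exact_mod_cast hl0
    have hjl : 0 ≤ j % l ∧ j % l < l := ⟨Int.emod_nonneg j hlz.ne', Int.emod_lt_of_pos j hlz⟩
    refine ⟨(((i - (j / l) * h : ℤ) : ZMod m), ⟨(j % l).toNat, by omega⟩), ?_⟩
    rw [hf]
    have htn : (((j % l).toNat : ℤ)) = j % l := Int.toNat_of_nonneg hjl.1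
    rw [show ((⟨(j % l).toNat, by omega⟩ : Fin l) : ℕ) = (j % l).toNat from rfl, htn]
    have hjdec : j = l * (j / l) + j % l := (Int.mul_ediv_add_emod j l).symm
    calc (i - j / l * h) • s + (j % l) • s'
        = i • s + ((j / l) • (-((h:ℤ) • s)) + (j % l) • s') := by
          rw [sub_zsmul, mul_zsmul]
          simp [neg_zsmul]
          abel
      _ = i • s + ((l * (j / l)) • s' + (j % l) • s') := by rw [← hls', mul_comm, mul_zsmul]
      _ = i • s + j • s' := by rw [← add_zsmul, ← hjdec]
      _ = g := hij
  -- step lemmas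
  have hstep1 : ∀ (a : ZMod m) (t : Fin l), f (a + 1, t) = f (a, t) + s := by
    intro a t
    simp only [hfdef, map_add, hφ1]
    abel
  have hstep2 : ∀ (a : ZMod m) (t : Fin l) (ht : (t : ℕ) + 1 < l),
      f (a, ⟨(t : ℕ) + 1, ht⟩) = f (a, t) + s' := by
    intro a t ht
    simp only [hfdef, succ_nsmul]
    abel
  have hstep3 : ∀ (a : ZMod m) (t : Fin l), (t : ℕ) = l - 1 →
      f (a - (h : ZMod m), ⟨0, hl0⟩) = f (a, t) + s' := by
    intro a t ht
    have hts : (t : ℕ) • s' + s' = (l : ℤ) • s' := by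
      rw [← succ_nsmul, ht, Nat.sub_add_cancel hl0, natCast_zsmul]
    have hφh : φ ((h : ℕ) : ZMod m) = (h : ℤ) • s := hφnat h
    simp only [hfdef, map_sub, hφh]
    rw [add_assoc, hts, hls']
    simp
    abel
  -- the equivalence
  have hbij : Function.Bijective f := ⟨hinj, hsurj⟩
  set e0 : (ZMod m × Fin l) ≃ G := Equiv.ofBijective f hbij with he0
  have hfe0 : ∀ u, f u = e0 u := fun u => rfl
  have core : ∀ u v : ZMod m × Fin l, cayArc {s, s'} (f u) (f v) ↔ gammaArc m l h u v := by
    rintro ⟨a, b⟩ ⟨a', b'⟩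
    constructor
    · intro hc
      rcases hc with hc | hc
      · -- f v - f u = s
        have : f (a', b') = f (a + 1, b) := by
          rw [hstep1, ← hc]; abel
        have := hinj this
        left
        exact ⟨congrArg Prod.fst this ▸ rfl, congrArg Prod.snd this ▸ rfl⟩
      · simp only [Set.mem_singleton_iff] at hc
        by_cases hb : (b : ℕ) + 1 < l
        · have : f (a', b') = f (a, ⟨(b : ℕ) + 1, hb⟩) := by
            rw [hstep2 a b hb, ← hc]; abel
          have := hinj this
          right; left
          exact ⟨congrArg Prod.fst this ▸ rfl, by rw [congrArg Prod.snd this]⟩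
        · have hbl : (b : ℕ) = l - 1 := by have := b.isLt; omega
          have : f (a', b') = f (a - (h : ZMod m), ⟨0, hl0⟩) := by
            rw [hstep3 a b hbl, ← hc]; abel
          have := hinj this
          right; right
          exact ⟨hbl, congrArg Prod.fst this ▸ rfl, by rw [congrArg Prod.snd this]⟩
    · rintro (⟨h1, h2⟩ | ⟨h1, h2⟩ | ⟨h1, h2, h3⟩)
      · have hv : ((a', b') : ZMod m × Fin l) = (a + 1, b) := Prod.ext h1 h2
        rw [hv, hstep1]
        left; abel
      · have hv : ((a', b') : ZMod m × Fin l) = (a, ⟨(b : ℕ) + 1, h2 ▸ b'.isLt⟩) :=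
          Prod.ext h1 (Fin.ext h2)
        rw [hv, hstep2 a b (h2 ▸ b'.isLt)]
        right; simp only [Set.mem_singleton_iff]; abel
      · have hv : ((a', b') : ZMod m × Fin l) = (a - (h : ZMod m), ⟨0, hl0⟩) :=
          Prod.ext h2 (Fin.ext h3)
        rw [hv, hstep3 a b h1]
        right; simp only [Set.mem_singleton_iff]; abel
  refine ⟨e0.symm, fun x y => ?_⟩
  have hx : f (e0.symm x) = x := e0.apply_symm_apply x
  have hy : f (e0.symm y) = y := e0.apply_symm_apply y
  have := core (e0.symm x) (e0.symm y)
  rwa [hx, hy] at this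
end

section
/- For all positive integers m, l and every integer h with 0 ≤ h < m, the digraph Γ_{m,l,h} is strongly connected; that is, for any two vertices x and y there is a directed path from x to y. -/
lemma horizAux (m l h : ℕ) (a : ZMod m) (b : Fin l) (k : ℕ) :
    Relation.ReflTransGen (gammaArc m l h) (a, b) (a + k, b) := by
  induction k with
  | zero => simpa using Relation.ReflTransGen.refl
  | succ n ih =>
    refine ih.tail ?_
    left
    constructor
    · push_cast; ring
    · rfl

lemma horiz (m l h : ℕ) (hm : 0 < m) (a a' : ZMod m) (b : Fin l) :
    Relation.ReflTransGen (gammaArc m l h) (a, b) (a', b) := by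
  haveI : NeZero m := ⟨hm.ne'⟩
  obtain ⟨k, hk⟩ := ZMod.natCast_rightInverse.surjective (a' - a)
  have := horizAux m l h a b k
  rwa [hk, add_sub_cancel] at this

lemma vert (m l h : ℕ) (a : ZMod m) (b : Fin l) (k : ℕ) (hk : (b : ℕ) + k < l) :
    Relation.ReflTransGen (gammaArc m l h) (a, b) (a, ⟨(b : ℕ) + k, hk⟩) := by
  induction k with
  | zero => simpa using Relation.ReflTransGen.refl
  | succ n ih =>
    refine (ih (by omega)).tail ?_
    right; left
    exact ⟨rfl, by simp [Nat.add_assoc]⟩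

theorem statement16 (m l h : ℕ) (hm : 0 < m) (hl : 0 < l) (hhm : h < m)
    (x y : ZMod m × Fin l) :
    Relation.ReflTransGen (gammaArc m l h) x y := by
  obtain ⟨a, b⟩ := x
  obtain ⟨c, d⟩ := y
  have hb : (b : ℕ) < l := b.isLt
  have h1 : Relation.ReflTransGen (gammaArc m l h) (a, b) (a, ⟨l - 1, by omega⟩) := by
    have := vert m l h a b (l - 1 - (b : ℕ)) (by omega)
    convert this using 3
    omega
  have h2 : gammaArc m l h (a, (⟨l - 1, by omega⟩ : Fin l)) (a - (h : ZMod m), ⟨0, hl⟩) := by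
    right; right
    exact ⟨rfl, rfl, rfl⟩
  have h3 : Relation.ReflTransGen (gammaArc m l h) (a - (h : ZMod m), (⟨0, hl⟩ : Fin l))
      (a - (h : ZMod m), d) := by
    have := vert m l h (a - (h : ZMod m)) ⟨0, hl⟩ (d : ℕ) (by simpa using d.isLt)
    convert this using 3
    simp
  have h4 : Relation.ReflTransGen (gammaArc m l h) (a - (h : ZMod m), d) (c, d) :=
    horiz m l h hm _ _ _
  exact ((h1.tail h2).trans h3).trans h4
end
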